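/- arXiv:1301.0511 — 6 statements merged into one kernel-verified Lean document; each statement's English description precedes it below -/
import Mathlib

section
/- As formal power series in two variables x₁, x₂ with a parameter x₃, one has 1/((1-x₁)(1-x₂)) + ∑_{n≥1} ∑_{k≥n} ∑_{l≥n} C(k,n) C(l,n) x₁^k x₂^l x₃^n = 1/((1-x₁)(1-x₂) - x₁x₂x₃). -/
open MvPowerSeries

/-- The formal power series in variables `x₁ = X 0`, `x₂ = X 1`, `x₃ = X 2` whose
coefficient of `x₁^k x₂^l x₃^n` is `C(k,n) · C(l,n)` when `n ≥ 1`, `k ≥ n`, `l ≥ n`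
and `0` otherwise; i.e. `∑_{n≥1} ∑_{k≥n} ∑_{l≥n} C(k,n) C(l,n) x₁^k x₂^l x₃^n`. -/
noncomputable def doubleBinomialSeries : MvPowerSeries (Fin 3) ℚ :=
  fun m =>
    if 1 ≤ m 2 ∧ m 2 ≤ m 0 ∧ m 2 ≤ m 1 then
      ((m 0).choose (m 2) * (m 1).choose (m 2) : ℚ)
    else 0

namespace DBShelper

open Finsupp

/-- The full series `∑_{n,k,l} C(k,n)C(l,n) x₁^k x₂^l x₃^n`. -/
noncomputable def F : MvPowerSeries (Fin 3) ℚ :=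
  fun m => ((m 0).choose (m 2) : ℚ) * ((m 1).choose (m 2) : ℚ)

/-- `1/((1-x₁)(1-x₂)) = ∑ x₁^k x₂^l`. -/
noncomputable def G : MvPowerSeries (Fin 3) ℚ :=
  fun m => if m 2 = 0 then 1 else 0

lemma ratKey (k l n : ℕ) :
    ((k.choose n : ℚ) * (l.choose n : ℚ))
      - (if 1 ≤ k then (((k-1).choose n : ℚ) * (l.choose n : ℚ)) else 0)
      - (if 1 ≤ l then ((k.choose n : ℚ) * ((l-1).choose n : ℚ)) else 0)
      + (if 1 ≤ k ∧ 1 ≤ l then (((k-1).choose n : ℚ) * ((l-1).choose n : ℚ)) else 0)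
      - (if 1 ≤ k ∧ 1 ≤ l ∧ 1 ≤ n then (((k-1).choose (n-1) : ℚ) * ((l-1).choose (n-1) : ℚ)) else 0)
      = if k = 0 ∧ l = 0 ∧ n = 0 then 1 else 0 := by
  rcases k with _|k <;> rcases l with _|l <;> rcases n with _|n <;>
    simp [Nat.choose_succ_succ] <;> push_cast <;> ring

lemma X_eq (s : Fin 3) : (X s : MvPowerSeries (Fin 3) ℚ) = monomial (single s 1) 1 := rfl

lemma X01_eq : (X 0 * X 1 : MvPowerSeries (Fin 3) ℚ)
    = monomial ((single (0:Fin 3) 1 + single 1 1 : Fin 3 →₀ ℕ)) 1 := by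
  rw [X_eq, X_eq, monomial_mul_monomial, one_mul]

lemma X012_eq : (X 0 * X 1 * X 2 : MvPowerSeries (Fin 3) ℚ)
    = monomial ((single (0:Fin 3) 1 + single 1 1 + single 2 1 : Fin 3 →₀ ℕ)) 1 := by
  rw [X_eq, X_eq, X_eq, monomial_mul_monomial, monomial_mul_monomial, one_mul, one_mul]

lemma le01 (m : Fin 3 →₀ ℕ) :
    ((single (0:Fin 3) 1 + single 1 1 : Fin 3 →₀ ℕ) ≤ m) ↔ 1 ≤ m 0 ∧ 1 ≤ m 1 := by
  rw [Finsupp.le_def]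
  constructor
  · intro h; exact ⟨by simpa using h 0, by simpa using h 1⟩
  · rintro ⟨h0, h1⟩ a
    fin_cases a <;> simp [h0, h1, Finsupp.single_apply]

lemma le012 (m : Fin 3 →₀ ℕ) :
    ((single (0:Fin 3) 1 + single 1 1 + single 2 1 : Fin 3 →₀ ℕ) ≤ m) ↔
      1 ≤ m 0 ∧ 1 ≤ m 1 ∧ 1 ≤ m 2 := by
  rw [Finsupp.le_def]
  constructor
  · intro h; exact ⟨by simpa using h 0, by simpa using h 1, by simpa using h 2⟩
  · rintro ⟨h0, h1, h2⟩ a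
    fin_cases a <;> simp [h0, h1, h2, Finsupp.single_apply]

lemma eqz (m : Fin 3 →₀ ℕ) : m = 0 ↔ m 0 = 0 ∧ m 1 = 0 ∧ m 2 = 0 := by
  constructor
  · rintro rfl; simp
  · rintro ⟨h0, h1, h2⟩; ext a; fin_cases a <;> assumption

lemma F_mul : F * ((1 - X (0:Fin 3)) * (1 - X 1) - X 0 * X 1 * X 2) = 1 := by
  have expand : ((1 - X (0:Fin 3)) * (1 - X 1) - X 0 * X 1 * X 2 : MvPowerSeries (Fin 3) ℚ)
      = 1 - X 0 - X 1 + X 0 * X 1 - X 0 * X 1 * X 2 := by ring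
  rw [expand]
  ext m
  rw [mul_sub, mul_add, mul_sub, mul_sub, mul_one, map_sub, map_add, map_sub, map_sub,
    X012_eq, X01_eq, X_eq 0, X_eq 1, coeff_mul_monomial, coeff_mul_monomial,
    coeff_mul_monomial, coeff_mul_monomial, coeff_one]
  simp only [Finsupp.single_le_iff, le01, le012, mul_one]
  have coeff_F : ∀ e : Fin 3 →₀ ℕ, coeff e F
      = ((e 0).choose (e 2) : ℚ) * ((e 1).choose (e 2) : ℚ) := fun _ => rfl
  simp only [coeff_F, Finsupp.sub_apply, Finsupp.add_apply, Finsupp.single_apply]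
  norm_num [show ((0:Fin 3) = 2) = False by simp, show ((1:Fin 3) = 2) = False by simp,
    show ((2:Fin 3) = 0) = False by simp, show ((2:Fin 3) = 1) = False by simp]
  simp only [eqz]
  exact ratKey (m 0) (m 1) (m 2)

lemma G_mul : G * ((1 - X (0:Fin 3)) * (1 - X 1)) = 1 := by
  have expand : ((1 - X (0:Fin 3)) * (1 - X 1) : MvPowerSeries (Fin 3) ℚ)
      = 1 - X 0 - X 1 + X 0 * X 1 := by ring
  rw [expand]
  ext m
  rw [mul_add, mul_sub, mul_sub, mul_one, map_add, map_sub, map_sub,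
    X01_eq, X_eq 0, X_eq 1, coeff_mul_monomial, coeff_mul_monomial,
    coeff_mul_monomial, coeff_one]
  have coeff_G : ∀ e : Fin 3 →₀ ℕ, coeff e G = if e 2 = 0 then 1 else 0 := fun _ => rfl
  simp only [coeff_G, Finsupp.single_le_iff, le01, Finsupp.sub_apply, Finsupp.add_apply,
    Finsupp.single_apply, mul_one, eqz]
  norm_num [show ((0:Fin 3) = 2) = False by simp, show ((1:Fin 3) = 2) = False by simp]
  split_ifs <;> simp_all <;> omega

lemma G_add : G + doubleBinomialSeries = F := by
  ext m
  rw [map_add, coeff_apply, coeff_apply, coeff_apply]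
  show (if m 2 = 0 then (1:ℚ) else 0) + _ = _
  unfold doubleBinomialSeries F
  rcases Nat.eq_zero_or_pos (m 2) with h | h
  · simp [h]
  · rcases le_or_gt (m 2) (m 0) with h0 | h0
    · rcases le_or_gt (m 2) (m 1) with h1 | h1
      · simp [h, h0, h1, Nat.pos_iff_ne_zero.mp h]
      · simp [h, Nat.choose_eq_zero_of_lt h1, Nat.pos_iff_ne_zero.mp h, not_le.mpr h1]
    · simp [h, Nat.choose_eq_zero_of_lt h0, Nat.pos_iff_ne_zero.mp h, not_le.mpr h0]

end DBShelper

/-- `1/((1-x₁)(1-x₂)) + ∑_{n≥1} ∑_{k≥n} ∑_{l≥n} C(k,n) C(l,n) x₁^k x₂^l x₃^n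
      = 1/((1-x₁)(1-x₂) - x₁x₂x₃)` as formal power series. -/
theorem statement1 :
    ((1 - MvPowerSeries.X (0 : Fin 3)) * (1 - MvPowerSeries.X (1 : Fin 3)))⁻¹
        + doubleBinomialSeries =
      ((1 - MvPowerSeries.X (0 : Fin 3)) * (1 - MvPowerSeries.X (1 : Fin 3))
          - MvPowerSeries.X 0 * MvPowerSeries.X 1 * MvPowerSeries.X 2)⁻¹ := by
  have h1 : constantCoeff ((1 - X (0:Fin 3)) * (1 - X 1) : MvPowerSeries (Fin 3) ℚ) ≠ 0 := by simp
  have h2 : constantCoeff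
      ((1 - X (0:Fin 3)) * (1 - X 1) - X 0 * X 1 * X 2 : MvPowerSeries (Fin 3) ℚ) ≠ 0 := by simp
  have hG : ((1 - X (0:Fin 3)) * (1 - X 1) : MvPowerSeries (Fin 3) ℚ)⁻¹ = DBShelper.G :=
    (MvPowerSeries.inv_eq_iff_mul_eq_one h1).2 DBShelper.G_mul
  rw [hG, DBShelper.G_add]
  exact ((MvPowerSeries.eq_inv_iff_mul_eq_one h2).2 DBShelper.F_mul)
end

section
/- For positive reals γ, c and formal variables u, v, the double generating function ∑_{k≥1} ∑_{l≥1} (∑_{n=1}^{min(k,l)} n·C(k,n)·C(l,n)·c^n·γ^{k+l-n}) u^k v^l equals cγuv / ((1-γu)(1-γv) - cγuv)². -/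
open MvPowerSeries

/-- The double generating function
`∑_{k≥1} ∑_{l≥1} (∑_{n=1}^{min(k,l)} n·C(k,n)·C(l,n)·c^n·γ^{k+l-n}) u^k v^l`
as a formal power series in `u = X 0`, `v = X 1` over `ℝ`. -/
noncomputable def covGenSeries (γ c : ℝ) : MvPowerSeries (Fin 2) ℝ :=
  fun m =>
    if 1 ≤ m 0 ∧ 1 ≤ m 1 then
      ∑ n ∈ Finset.Icc 1 (min (m 0) (m 1)),
        (n : ℝ) * ((m 0).choose n) * ((m 1).choose n) * c ^ n * γ ^ (m 0 + m 1 - n)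
    else 0

section Aux

open Finset

/-! Auxiliary definitions -/

noncomputable def Fc (γ c : ℝ) (k l : ℕ) : ℝ :=
  ∑ n ∈ Finset.range (k+1),
    (n : ℝ) * (k.choose n) * (l.choose n) * c ^ n * γ ^ (k + l - n)

noncomputable def Gc (γ c : ℝ) : ℕ → ℕ → ℝ
  | k+1, l+1 => ∑ m ∈ Finset.range (k+1),
      ((k.choose m : ℝ)) * (l.choose m) * c ^ (m+1) * γ ^ (k + l + 1 - m)
  | _, _ => 0

noncomputable def Dser (γ c : ℝ) : MvPowerSeries (Fin 2) ℝ :=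
  (1 - MvPowerSeries.C (σ := Fin 2) (R := ℝ) γ * MvPowerSeries.X 0) *
      (1 - MvPowerSeries.C (σ := Fin 2) (R := ℝ) γ * MvPowerSeries.X 1) -
    MvPowerSeries.C (σ := Fin 2) (R := ℝ) (c * γ) * (MvPowerSeries.X 0 * MvPowerSeries.X 1)

lemma Fc_zero_left (γ c : ℝ) (l : ℕ) : Fc γ c 0 l = 0 := by
  simp [Fc]

lemma Fc_zero_right (γ c : ℝ) (k : ℕ) : Fc γ c k 0 = 0 := by
  refine Finset.sum_eq_zero fun n hn => ?_
  rcases n with _ | n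
  · simp
  · simp [Nat.choose_eq_zero_of_lt (Nat.succ_pos n)]

lemma Gc_zero_left (γ c : ℝ) (l : ℕ) : Gc γ c 0 l = 0 := by cases l <;> rfl
lemma Gc_zero_right (γ c : ℝ) (k : ℕ) : Gc γ c k 0 = 0 := by cases k <;> rfl

lemma Gc_right_one (γ c : ℝ) (k : ℕ) : Gc γ c (k+1) 1 = c * γ^(k+1) := by
  show (∑ m ∈ range (k+1), ((k.choose m : ℝ)) * ((0:ℕ).choose m) * c^(m+1) * γ^(k+0+1-m)) = _
  rw [Finset.sum_eq_single 0]
  · simp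
  · intro b _ hb
    rcases b with _ | b
    · exact absurd rfl hb
    · simp
  · intro h; exact absurd (Finset.mem_range.2 (Nat.succ_pos k)) h

lemma Gc_one_right (γ c : ℝ) (l : ℕ) : Gc γ c 1 (l+1) = c * γ^(l+1) := by
  show (∑ m ∈ range 1, (((0:ℕ).choose m : ℝ)) * (l.choose m) * c^(m+1) * γ^(0+l+1-m)) = _
  simp [pow_succ]

/-! The two recurrences -/

lemma recF (γ c : ℝ) (k l : ℕ) :
    Fc γ c (k+1) (l+1) - γ * Fc γ c k (l+1) - γ * Fc γ c (k+1) l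
      + (γ^2 - c*γ) * Fc γ c k l = Gc γ c (k+1) (l+1) := by
  set V : ℕ → ℝ := fun n => (n:ℝ) * (k.choose (n-1)) * (l.choose (n-1)) * c^n * γ^(k+l+2-n) with hV
  set Q : ℕ → ℝ := fun n => (n:ℝ) * (k.choose n) * (l.choose n) * c^(n+1) * γ^(k+l+1-n) with hQ
  have h2 : Fc γ c k (l+1) = ∑ n ∈ range (k+2),
      (n:ℝ) * (k.choose n) * ((l+1).choose n) * c ^ n * γ ^ (k+(l+1)-n) := by
    rw [Fc]; conv_rhs => rw [Finset.sum_range_succ]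
    simp [Nat.choose_succ_self]
  have h4 : Fc γ c k l = ∑ n ∈ range (k+2),
      (n:ℝ) * (k.choose n) * (l.choose n) * c ^ n * γ ^ (k+l-n) := by
    rw [Fc]; conv_rhs => rw [Finset.sum_range_succ]
    simp [Nat.choose_succ_self]
  rw [h2, h4, Fc, Fc, Finset.mul_sum, Finset.mul_sum, Finset.mul_sum,
    ← Finset.sum_sub_distrib, ← Finset.sum_sub_distrib, ← Finset.sum_add_distrib]
  have key : ∀ n ∈ range (k+2),
      (n:ℝ) * ((k+1).choose n) * ((l+1).choose n) * c ^ n * γ ^ (k+1+(l+1)-n)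
        - γ * ((n:ℝ) * (k.choose n) * ((l+1).choose n) * c ^ n * γ ^ (k+(l+1)-n))
        - γ * ((n:ℝ) * ((k+1).choose n) * (l.choose n) * c ^ n * γ ^ (k+1+l-n))
        + (γ^2 - c*γ) * ((n:ℝ) * (k.choose n) * (l.choose n) * c ^ n * γ ^ (k+l-n))
      = V n - Q n := by
    intro n hn
    simp only [Finset.mem_range] at hn
    rcases n with _ | j
    · simp [hV, hQ]
    · by_cases h : j + 1 ≤ k + l
      · have e1 : k+1+(l+1)-(j+1) = (k+l-(j+1))+2 := by omega
        have e2 : k+(l+1)-(j+1) = (k+l-(j+1))+1 := by omega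
        have e3 : k+1+l-(j+1) = (k+l-(j+1))+1 := by omega
        have e4 : k+l+2-(j+1) = (k+l-(j+1))+2 := by omega
        have e5 : k+l+1-(j+1) = (k+l-(j+1))+1 := by omega
        simp only [hV, hQ, e1, e2, e3, e4, e5, Nat.add_sub_cancel,
          Nat.choose_succ_succ k j, Nat.choose_succ_succ l j]
        push_cast
        ring
      · have hl : l = 0 := by omega
        have hj : j = k := by omega
        subst hl hj
        rcases j with _ | a
        · norm_num [hV, hQ]
        · simp [hV, hQ, Nat.choose_succ_self,
            Nat.choose_eq_zero_of_lt (show 1 < a+1+1 by omega)]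
  rw [Finset.sum_congr rfl key, Finset.sum_sub_distrib,
    Finset.sum_range_succ' V (k+1), Finset.sum_range_succ Q (k+1)]
  have hV0 : V 0 = 0 := by simp [hV]
  have hQtop : Q (k+1) = 0 := by simp [hQ, Nat.choose_succ_self]
  rw [hV0, hQtop, add_zero, add_zero, show Gc γ c (k+1) (l+1)
    = ∑ m ∈ Finset.range (k+1), ((k.choose m : ℝ)) * (l.choose m) * c ^ (m+1) * γ ^ (k + l + 1 - m) from rfl,
    ← Finset.sum_sub_distrib]
  refine Finset.sum_congr rfl fun j hj => ?_
  simp only [hV, hQ, Nat.add_sub_cancel, show k+l+2-(j+1) = k+l+1-j from by omega]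
  push_cast
  ring

lemma recG (γ c : ℝ) (k l : ℕ) :
    Gc γ c (k+1) (l+1) - γ * Gc γ c k (l+1) - γ * Gc γ c (k+1) l
      + (γ^2 - c*γ) * Gc γ c k l = if k = 0 ∧ l = 0 then c*γ else 0 := by
  rcases k with _ | a
  · rcases l with _ | b
    · simp [Gc_right_one, Gc_zero_left, Gc_zero_right]
    · rw [Gc_zero_left, Gc_zero_left, Gc_one_right, Gc_one_right]
      simp [pow_succ]
      ring
  · rcases l with _ | b
    · rw [Gc_zero_right, Gc_zero_right, Gc_right_one, Gc_right_one]
      simp [pow_succ]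
      ring
    · simp only [show ¬(a+1 = 0 ∧ b+1 = 0) from by omega, if_false]
      set V : ℕ → ℝ := fun m => if m = 0 then 0 else
        (a.choose (m-1) : ℝ) * (b.choose (m-1)) * c^(m+1) * γ^(a+b+3-m) with hV
      set W : ℕ → ℝ := fun m => (a.choose m : ℝ) * (b.choose m) * c^(m+2) * γ^(a+b+2-m) with hW
      have h2 : Gc γ c (a+1) (b+1+1) = ∑ m ∈ range (a+2),
          (a.choose m : ℝ) * ((b+1).choose m) * c^(m+1) * γ^(a+(b+1)+1-m) := by
        show (∑ m ∈ range (a+1), (a.choose m : ℝ) * ((b+1).choose m) * c^(m+1) * γ^(a+(b+1)+1-m)) = _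
        conv_rhs => rw [Finset.sum_range_succ]
        simp [Nat.choose_succ_self]
      have h4 : Gc γ c (a+1) (b+1) = ∑ m ∈ range (a+2),
          (a.choose m : ℝ) * (b.choose m) * c^(m+1) * γ^(a+b+1-m) := by
        show (∑ m ∈ range (a+1), (a.choose m : ℝ) * (b.choose m) * c^(m+1) * γ^(a+b+1-m)) = _
        conv_rhs => rw [Finset.sum_range_succ]
        simp [Nat.choose_succ_self]
      rw [h2, h4, show Gc γ c (a+1+1) (b+1+1) = ∑ m ∈ range (a+2),
          ((a+1).choose m : ℝ) * ((b+1).choose m) * c^(m+1) * γ^((a+1)+(b+1)+1-m) from rfl,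
        show Gc γ c (a+1+1) (b+1) = ∑ m ∈ range (a+2),
          ((a+1).choose m : ℝ) * (b.choose m) * c^(m+1) * γ^((a+1)+b+1-m) from rfl,
        Finset.mul_sum, Finset.mul_sum, Finset.mul_sum,
        ← Finset.sum_sub_distrib, ← Finset.sum_sub_distrib, ← Finset.sum_add_distrib]
      have key : ∀ m ∈ range (a+2),
          ((a+1).choose m : ℝ) * ((b+1).choose m) * c^(m+1) * γ^((a+1)+(b+1)+1-m)
            - γ * ((a.choose m : ℝ) * ((b+1).choose m) * c^(m+1) * γ^(a+(b+1)+1-m))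
            - γ * (((a+1).choose m : ℝ) * (b.choose m) * c^(m+1) * γ^((a+1)+b+1-m))
            + (γ^2 - c*γ) * ((a.choose m : ℝ) * (b.choose m) * c^(m+1) * γ^(a+b+1-m))
          = V m - W m := by
        intro m hm
        simp only [Finset.mem_range] at hm
        rcases m with _ | j
        · have e1 : (a+1)+(b+1)+1-0 = (a+b+1)+2 := by omega
          have e2 : a+(b+1)+1-0 = (a+b+1)+1 := by omega
          have e3 : (a+1)+b+1-0 = (a+b+1)+1 := by omega
          have e4 : a+b+2-0 = (a+b+1)+1 := by omega
          simp only [hV, hW, e1, e2, e3, e4, if_pos rfl, Nat.choose_zero_right]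
          push_cast
          ring
        · have e1 : (a+1)+(b+1)+1-(j+1) = (a+b-j)+2 := by omega
          have e2 : a+(b+1)+1-(j+1) = (a+b-j)+1 := by omega
          have e3 : (a+1)+b+1-(j+1) = (a+b-j)+1 := by omega
          have e4 : a+b+1-(j+1) = a+b-j := by omega
          have e5 : a+b+3-(j+1) = (a+b-j)+2 := by omega
          have e6 : a+b+2-(j+1) = (a+b-j)+1 := by omega
          simp only [hV, hW, e1, e2, e3, e4, e5, e6, Nat.add_sub_cancel,
            if_neg (Nat.succ_ne_zero j), Nat.choose_succ_succ a j, Nat.choose_succ_succ b j]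
          push_cast
          ring
      rw [Finset.sum_congr rfl key, Finset.sum_sub_distrib,
        Finset.sum_range_succ' V (a+1), Finset.sum_range_succ W (a+1)]
      have hV0 : V 0 = 0 := by simp [hV]
      have hWtop : W (a+1) = 0 := by simp [hW, Nat.choose_succ_self]
      rw [hV0, hWtop, add_zero, add_zero, ← Finset.sum_sub_distrib]
      refine Finset.sum_eq_zero fun j hj => ?_
      simp only [hV, hW, Nat.add_sub_cancel, if_neg (Nat.succ_ne_zero j),
        show a+b+3-(j+1) = a+b+2-j from by omega]
      ring

lemma recF' (γ c : ℝ) (k l : ℕ) :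
    Fc γ c k l - γ * Fc γ c (k-1) l - γ * Fc γ c k (l-1)
      + (γ^2 - c*γ) * Fc γ c (k-1) (l-1) = Gc γ c k l := by
  rcases k with _ | k
  · simp [Fc_zero_left, Gc_zero_left]
  · rcases l with _ | l
    · simp [Fc_zero_right, Gc_zero_right]
    · simpa [Nat.add_sub_cancel] using recF γ c k l

lemma recG' (γ c : ℝ) (k l : ℕ) :
    Gc γ c k l - γ * Gc γ c (k-1) l - γ * Gc γ c k (l-1)
      + (γ^2 - c*γ) * Gc γ c (k-1) (l-1) = if k = 1 ∧ l = 1 then c*γ else 0 := by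
  rcases k with _ | k
  · simp [Gc_zero_left]
  · rcases l with _ | l
    · simp [Gc_zero_right]
    · have h := recG γ c k l
      simp only [Nat.add_sub_cancel]
      rw [h]
      rcases Decidable.em (k = 0 ∧ l = 0) with h' | h'
      · obtain ⟨rfl, rfl⟩ := h'; simp
      · rw [if_neg h', if_neg (by omega)]

/-! Power series infrastructure -/

lemma Dser_eq (γ c : ℝ) : Dser γ c
    = 1 - MvPowerSeries.C (σ := Fin 2) (R := ℝ) γ * MvPowerSeries.X 0
        - MvPowerSeries.C (σ := Fin 2) (R := ℝ) γ * MvPowerSeries.X 1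
        + MvPowerSeries.C (σ := Fin 2) (R := ℝ) (γ^2 - c*γ) * (MvPowerSeries.X 0 * MvPowerSeries.X 1) := by
  have h : (MvPowerSeries.C (σ := Fin 2) (R := ℝ)) (γ^2 - c*γ)
      = MvPowerSeries.C (σ := Fin 2) (R := ℝ) γ * MvPowerSeries.C (σ := Fin 2) (R := ℝ) γ
        - MvPowerSeries.C (σ := Fin 2) (R := ℝ) (c*γ) := by
    rw [← map_mul, ← map_sub]
    congr 1
    ring
  rw [Dser, h]
  ring

lemma aux0 (φ : MvPowerSeries (Fin 2) ℝ) (m : Fin 2 →₀ ℕ) :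
    MvPowerSeries.coeff (R := ℝ) m (φ * MvPowerSeries.X 0)
      = if 1 ≤ m 0 then MvPowerSeries.coeff (R := ℝ) (m - Finsupp.single 0 1) φ else 0 := by
  rw [MvPowerSeries.X_def, MvPowerSeries.coeff_mul_monomial]
  simp [Finsupp.single_le_iff]

lemma aux1 (φ : MvPowerSeries (Fin 2) ℝ) (m : Fin 2 →₀ ℕ) :
    MvPowerSeries.coeff (R := ℝ) m (φ * MvPowerSeries.X 1)
      = if 1 ≤ m 1 then MvPowerSeries.coeff (R := ℝ) (m - Finsupp.single 1 1) φ else 0 := by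
  rw [MvPowerSeries.X_def, MvPowerSeries.coeff_mul_monomial]
  simp [Finsupp.single_le_iff]

lemma X01_eq : (MvPowerSeries.X 0 * MvPowerSeries.X 1 : MvPowerSeries (Fin 2) ℝ)
    = MvPowerSeries.monomial (R := ℝ) (Finsupp.single 0 1 + Finsupp.single 1 1) 1 := by
  rw [MvPowerSeries.X_def, MvPowerSeries.X_def, MvPowerSeries.monomial_mul_monomial, mul_one]

lemma le01 (m : Fin 2 →₀ ℕ) :
    (Finsupp.single 0 1 + Finsupp.single 1 1 ≤ m) ↔ 1 ≤ m 0 ∧ 1 ≤ m 1 := by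
  constructor
  · intro h
    refine ⟨le_trans ?_ (h 0), le_trans ?_ (h 1)⟩ <;> simp [Finsupp.single_apply]
  · rintro ⟨h0, h1⟩ a
    fin_cases a <;> simp [Finsupp.single_apply] <;> assumption

lemma aux01 (φ : MvPowerSeries (Fin 2) ℝ) (m : Fin 2 →₀ ℕ) :
    MvPowerSeries.coeff (R := ℝ) m (φ * (MvPowerSeries.X 0 * MvPowerSeries.X 1))
      = if 1 ≤ m 0 ∧ 1 ≤ m 1 then
          MvPowerSeries.coeff (R := ℝ) (m - (Finsupp.single 0 1 + Finsupp.single 1 1)) φ else 0 := by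
  rw [X01_eq, MvPowerSeries.coeff_mul_monomial]
  by_cases h : 1 ≤ m 0 ∧ 1 ≤ m 1
  · rw [if_pos ((le01 m).2 h), if_pos h, mul_one]
  · rw [if_neg (fun hh => h ((le01 m).1 hh)), if_neg h]

lemma sub0_app0 (m : Fin 2 →₀ ℕ) :
    ((m - Finsupp.single (0 : Fin 2) 1 : Fin 2 →₀ ℕ)) 0 = m 0 - 1 := by
  simp [Finsupp.tsub_apply, Finsupp.single_apply]

lemma sub0_app1 (m : Fin 2 →₀ ℕ) :
    ((m - Finsupp.single (0 : Fin 2) 1 : Fin 2 →₀ ℕ)) 1 = m 1 := by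
  simp [Finsupp.tsub_apply, Finsupp.single_apply]

lemma sub1_app0 (m : Fin 2 →₀ ℕ) :
    ((m - Finsupp.single (1 : Fin 2) 1 : Fin 2 →₀ ℕ)) 0 = m 0 := by
  simp [Finsupp.tsub_apply, Finsupp.single_apply]

lemma sub1_app1 (m : Fin 2 →₀ ℕ) :
    ((m - Finsupp.single (1 : Fin 2) 1 : Fin 2 →₀ ℕ)) 1 = m 1 - 1 := by
  simp [Finsupp.tsub_apply, Finsupp.single_apply]

lemma sub01_app0 (m : Fin 2 →₀ ℕ) :
    ((m - (Finsupp.single (0 : Fin 2) 1 + Finsupp.single (1 : Fin 2) 1) : Fin 2 →₀ ℕ)) 0 = m 0 - 1 := by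
  simp [Finsupp.tsub_apply, Finsupp.single_apply]

lemma sub01_app1 (m : Fin 2 →₀ ℕ) :
    ((m - (Finsupp.single (0 : Fin 2) 1 + Finsupp.single (1 : Fin 2) 1) : Fin 2 →₀ ℕ)) 1 = m 1 - 1 := by
  simp [Finsupp.tsub_apply, Finsupp.single_apply]

lemma coeff_mul_D (γ c : ℝ) (f : ℕ → ℕ → ℝ) (φ : MvPowerSeries (Fin 2) ℝ)
    (hφ : ∀ m : Fin 2 →₀ ℕ, MvPowerSeries.coeff (R := ℝ) m φ = f (m 0) (m 1))
    (h1 : ∀ l, f 0 l = 0) (h2 : ∀ k, f k 0 = 0) (m : Fin 2 →₀ ℕ) :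
    MvPowerSeries.coeff (R := ℝ) m (φ * Dser γ c)
      = f (m 0) (m 1) - γ * f (m 0 - 1) (m 1) - γ * f (m 0) (m 1 - 1)
        + (γ^2 - c*γ) * f (m 0 - 1) (m 1 - 1) := by
  have hexp : φ * Dser γ c = φ - MvPowerSeries.C (σ := Fin 2) (R := ℝ) γ * (φ * MvPowerSeries.X 0)
      - MvPowerSeries.C (σ := Fin 2) (R := ℝ) γ * (φ * MvPowerSeries.X 1)
      + MvPowerSeries.C (σ := Fin 2) (R := ℝ) (γ^2-c*γ) * (φ * (MvPowerSeries.X 0 * MvPowerSeries.X 1)) := by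
    rw [Dser_eq]; ring
  rw [hexp, map_add, map_sub, map_sub, MvPowerSeries.coeff_C_mul,
    MvPowerSeries.coeff_C_mul, MvPowerSeries.coeff_C_mul, aux0, aux1, aux01]
  simp only [hφ, sub0_app0, sub0_app1, sub1_app0, sub1_app1, sub01_app0, sub01_app1]
  by_cases hm0 : 1 ≤ m 0 <;> by_cases hm1 : 1 ≤ m 1
  · rw [if_pos hm0, if_pos hm1, if_pos ⟨hm0, hm1⟩]
  · have h : m 1 = 0 := by omega
    rw [if_pos hm0, if_neg hm1, if_neg (by tauto), h]
    simp [h2]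
  · have h : m 0 = 0 := by omega
    rw [if_neg hm0, if_pos hm1, if_neg (by tauto), h]
    simp [h1]
  · have h : m 0 = 0 := by omega
    have h' : m 1 = 0 := by omega
    rw [if_neg hm0, if_neg hm1, if_neg (by tauto), h, h']
    simp [h1, h2]

lemma fin2_eq_iff (m : Fin 2 →₀ ℕ) (a b : ℕ) :
    m = Finsupp.single 0 a + Finsupp.single 1 b ↔ m 0 = a ∧ m 1 = b := by
  constructor
  · rintro rfl
    constructor <;> simp [Finsupp.single_apply]
  · rintro ⟨h0, h1⟩
    ext t
    fin_cases t <;> simp [Finsupp.single_apply] <;> assumption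


end Aux

section Aux2

open Finset

lemma covGenSeries_apply (γ c : ℝ) (m : Fin 2 →₀ ℕ) :
    MvPowerSeries.coeff (R := ℝ) m (covGenSeries γ c) = Fc γ c (m 0) (m 1) := by
  rw [MvPowerSeries.coeff_apply, covGenSeries]
  by_cases h : 1 ≤ m 0 ∧ 1 ≤ m 1
  · rw [if_pos h, Fc]
    apply Finset.sum_subset
    · intro n hn
      simp only [Finset.mem_Icc, Finset.mem_range] at *
      omega
    · intro n hn hn'
      simp only [Finset.mem_Icc, Finset.mem_range, not_and, not_le] at hn hn'
      rcases Nat.eq_zero_or_pos n with rfl | hp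
      · simp
      · have hl : m 1 < n := by omega
        simp [Nat.choose_eq_zero_of_lt hl]
  · rw [if_neg h]
    have h' : m 0 = 0 ∨ m 1 = 0 := by omega
    rcases h' with h' | h'
    · rw [h', Fc_zero_left]
    · rw [h', Fc_zero_right]

noncomputable def Gser (γ c : ℝ) : MvPowerSeries (Fin 2) ℝ := fun m => Gc γ c (m 0) (m 1)

lemma Gser_apply (γ c : ℝ) (m : Fin 2 →₀ ℕ) :
    MvPowerSeries.coeff (R := ℝ) m (Gser γ c) = Gc γ c (m 0) (m 1) := rfl

lemma Gser_mul (γ c : ℝ) :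
    Gser γ c * Dser γ c
      = MvPowerSeries.C (σ := Fin 2) (R := ℝ) (c*γ) * MvPowerSeries.X 0 * MvPowerSeries.X 1 := by
  apply MvPowerSeries.ext
  intro m
  rw [coeff_mul_D γ c (Gc γ c) _ (Gser_apply γ c)
    (Gc_zero_left γ c) (Gc_zero_right γ c) m, recG' γ c (m 0) (m 1)]
  have hmono : MvPowerSeries.C (σ := Fin 2) (R := ℝ) (c*γ) * MvPowerSeries.X 0 * MvPowerSeries.X 1
      = MvPowerSeries.monomial (R := ℝ) (Finsupp.single 0 1 + Finsupp.single 1 1) (c*γ) := by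
    rw [mul_assoc, X01_eq, ← MvPowerSeries.monomial_zero_eq_C_apply,
      MvPowerSeries.monomial_mul_monomial, zero_add, mul_one]
  rw [hmono, MvPowerSeries.coeff_monomial]
  by_cases h : m 0 = 1 ∧ m 1 = 1
  · rw [if_pos h, if_pos ((fin2_eq_iff m 1 1).2 h)]
  · rw [if_neg h, if_neg (fun hh => h ((fin2_eq_iff m 1 1).1 hh))]

lemma cov_mul (γ c : ℝ) :
    covGenSeries γ c * Dser γ c = Gser γ c := by
  apply MvPowerSeries.ext
  intro m
  rw [coeff_mul_D γ c (Fc γ c) _ (covGenSeries_apply γ c)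
    (Fc_zero_left γ c) (Fc_zero_right γ c) m, Gser_apply]
  exact recF' γ c (m 0) (m 1)

end Aux2

/-- For positive reals `γ`, `c`, the double generating function equals
`cγuv / ((1-γu)(1-γv) - cγuv)²` as formal power series in `u, v` over `ℝ`. -/
theorem statement2 (γ c : ℝ) (hγ : 0 < γ) (hc : 0 ≤ c) :
    covGenSeries γ c =
      (MvPowerSeries.C (c * γ) : MvPowerSeries (Fin 2) ℝ) * MvPowerSeries.X 0 * MvPowerSeries.X 1 *
        (((1 - (MvPowerSeries.C γ : MvPowerSeries (Fin 2) ℝ) * MvPowerSeries.X 0) *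
            (1 - (MvPowerSeries.C γ : MvPowerSeries (Fin 2) ℝ) * MvPowerSeries.X 1) -
          (MvPowerSeries.C (c * γ) : MvPowerSeries (Fin 2) ℝ) *
            (MvPowerSeries.X 0 * MvPowerSeries.X 1))⁻¹) ^ 2 := by
  show covGenSeries γ c = MvPowerSeries.C (σ := Fin 2) (R := ℝ) (c * γ) * MvPowerSeries.X 0 *
    MvPowerSeries.X 1 * ((Dser γ c)⁻¹) ^ 2
  have hD : MvPowerSeries.constantCoeff (σ := Fin 2) (R := ℝ) (Dser γ c) ≠ 0 := by
    have h1 : MvPowerSeries.constantCoeff (σ := Fin 2) (R := ℝ) (Dser γ c) = 1 := by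
      simp [Dser]
    rw [h1]; exact one_ne_zero
  have hinv : Dser γ c * (Dser γ c)⁻¹ = 1 := MvPowerSeries.mul_inv_cancel _ hD
  have key : covGenSeries γ c * Dser γ c * Dser γ c
      = MvPowerSeries.C (σ := Fin 2) (R := ℝ) (c*γ) * MvPowerSeries.X 0 * MvPowerSeries.X 1 := by
    rw [cov_mul, Gser_mul]
  calc covGenSeries γ c
      = covGenSeries γ c * (Dser γ c * (Dser γ c)⁻¹) * (Dser γ c * (Dser γ c)⁻¹) := by
        rw [hinv]; ring
    _ = covGenSeries γ c * Dser γ c * Dser γ c * ((Dser γ c)⁻¹ * (Dser γ c)⁻¹) := by ring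
    _ = MvPowerSeries.C (σ := Fin 2) (R := ℝ) (c*γ) * MvPowerSeries.X 0 * MvPowerSeries.X 1
          * ((Dser γ c)⁻¹) ^ 2 := by rw [key]; ring
end

section
/- For the one-sided Plancherel state with parameter γL, the state of the element p^{#}_{ρ,I} of the center of U(gl(I)) equals |I|^{ℓ(ρ)} (γL)^{|ρ|}, for every partition ρ and finite index set I. -/
open Equiv Equiv.Perm

section Aux

lemma iter_exp_lin {E : Type*} [NormedAddCommGroup E] [NormedSpace ℝ E]
    (g : E →L[ℝ] ℝ) (c : ℝ) :
    ∀ (n : ℕ) (x : E) (m : Fin n → E),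
      iteratedFDeriv ℝ n (fun y => Real.exp (g y + c)) x m
        = Real.exp (g x + c) * ∏ t, g (m t) := by
  intro n
  induction n with
  | zero => intro x m; simp
  | succ n IH =>
    intro x m
    have hcd : ContDiff ℝ ⊤ (fun y => Real.exp (g y + c)) :=
      Real.contDiff_exp.comp (g.contDiff.add contDiff_const)
    have hfd : (fun y => fderiv ℝ (fun z => Real.exp (g z + c)) y)
        = (fun r => ((1 : ℝ →L[ℝ] ℝ).smulRight g) r) ∘ (fun y => Real.exp (g y + c)) := by
      funext y
      have : HasFDerivAt (fun z => Real.exp (g z + c)) (Real.exp (g y + c) • g) y :=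
        (g.hasFDerivAt.add_const c).exp
      simp only [Function.comp]
      rw [this.fderiv]
      ext v
      simp
    rw [iteratedFDeriv_succ_apply_right, hfd,
      ContinuousLinearMap.iteratedFDeriv_comp_left _ hcd.contDiffAt le_top]
    simp only [ContinuousLinearMap.compContinuousMultilinearMap_coe, Function.comp_apply]
    rw [IH x (Fin.init m)]
    simp [Fin.prod_univ_castSucc, Fin.init, mul_assoc, mul_comm, mul_left_comm]

variable {k : ℕ}

noncomputable instance Qfin (s : Equiv.Perm (Fin k)) :
    Fintype (Quotient (SameCycle.setoid s)) :=
  Fintype.ofFinite _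

lemma const_on_cycles {J : Type*} (s : Equiv.Perm (Fin k)) (i : Fin k → J)
    (h : ∀ t, i t = i (s t)) {a b : Fin k} (hab : s.SameCycle a b) : i a = i b := by
  obtain ⟨n, rfl⟩ := hab
  have hnat : ∀ (m : ℕ) (x : Fin k), i ((s ^ m) x) = i x := by
    intro m
    induction m with
    | zero => simp
    | succ m IH => intro x; rw [pow_succ, Equiv.Perm.mul_apply, IH, ← h]
  induction n using Int.rec with
  | ofNat m => simpa using (hnat m a).symm
  | negSucc m =>
    have h2 : (s ^ Int.negSucc m) a = (s ^ (m+1) : Equiv.Perm (Fin k))⁻¹ a := by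
      rw [zpow_negSucc]
    rw [h2]
    have := hnat (m+1) ((s ^ (m+1) : Equiv.Perm (Fin k))⁻¹ a)
    simpa using this

lemma card_fixed_fun (s : Equiv.Perm (Fin k)) {J : Type*} [Fintype J] [DecidableEq J] :
    Fintype.card {i : Fin k → J // ∀ t, i t = i (s t)} =
      Fintype.card J ^ Nat.card (Quotient (SameCycle.setoid s)) := by
  classical
  rw [Nat.card_eq_fintype_card, ← Fintype.card_fun]
  apply Fintype.card_congr
  refine ⟨fun p => Quotient.lift p.1 (fun a b hab => const_on_cycles s p.1 p.2 hab),
    fun j => ⟨fun t => j ⟦t⟧, fun t => ?_⟩, fun p => ?_, fun j => ?_⟩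
  · exact congrArg j (Quotient.sound (⟨1, by simp⟩ : s.SameCycle t (s t)))
  · ext t; rfl
  · funext q; induction q using Quotient.ind; rfl

lemma sameCycle_fixed_eq {s : Equiv.Perm (Fin k)} {x y : Fin k} (hx : x ∉ s.support)
    (hxy : s.SameCycle x y) : x = y := by
  obtain ⟨n, rfl⟩ := hxy
  rw [Equiv.Perm.notMem_support] at hx
  exact (Equiv.Perm.zpow_apply_eq_self_of_apply_eq_self hx n).symm

lemma sameCycle_support_iff {s : Equiv.Perm (Fin k)} {x y : Fin k}
    (hxy : s.SameCycle x y) : x ∈ s.support ↔ y ∈ s.support := by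
  constructor <;> intro h
  · by_contra hy
    have hyx : y = x := sameCycle_fixed_eq hy hxy.symm
    rw [hyx] at hy; exact hy h
  · by_contra hx
    have hxy' : x = y := sameCycle_fixed_eq hx hxy
    rw [hxy'] at hx; exact hx h

noncomputable def classify (s : Equiv.Perm (Fin k)) :
    Quotient (SameCycle.setoid s) →
      {c // c ∈ s.cycleFactorsFinset} ⊕ {x : Fin k // x ∉ s.support} :=
  Quotient.lift
    (fun x => if h : x ∈ s.support then
        Sum.inl ⟨s.cycleOf x, Equiv.Perm.cycleOf_mem_cycleFactorsFinset_iff.2 h⟩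
      else Sum.inr ⟨x, h⟩)
    (by
      intro a b hab
      by_cases ha : a ∈ s.support
      · have hb : b ∈ s.support := (sameCycle_support_iff hab).1 ha
        rw [dif_pos ha, dif_pos hb]
        simp only [Sum.inl.injEq, Subtype.mk.injEq]
        exact hab.cycleOf_eq
      · have hb : b ∉ s.support := fun hb => ha ((sameCycle_support_iff hab).2 hb)
        rw [dif_neg ha, dif_neg hb]
        simp only [Sum.inr.injEq, Subtype.mk.injEq]
        exact sameCycle_fixed_eq ha hab)

lemma classify_bijective (s : Equiv.Perm (Fin k)) : Function.Bijective (classify s) := by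
  constructor
  · intro q1 q2
    induction q1 using Quotient.ind with | _ x =>
    induction q2 using Quotient.ind with | _ y =>
    intro h
    simp only [classify, Quotient.lift_mk] at h
    by_cases hx : x ∈ s.support <;> by_cases hy : y ∈ s.support
    · rw [dif_pos hx, dif_pos hy] at h
      simp only [Sum.inl.injEq, Subtype.mk.injEq] at h
      apply Quotient.sound
      have : y ∈ (s.cycleOf x).support := by
        rw [h]
        exact Equiv.Perm.mem_support_cycleOf_iff.2 ⟨Equiv.Perm.SameCycle.refl s y, hy⟩
      exact (Equiv.Perm.mem_support_cycleOf_iff.1 this).1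
    · rw [dif_pos hx, dif_neg hy] at h; exact absurd h (by simp)
    · rw [dif_neg hx, dif_pos hy] at h; exact absurd h (by simp)
    · rw [dif_neg hx, dif_neg hy] at h
      simp only [Sum.inr.injEq, Subtype.mk.injEq] at h
      exact congrArg _ h
  · rintro (⟨c, hc⟩ | ⟨x, hx⟩)
    · have hcyc : c.IsCycle := (Equiv.Perm.mem_cycleFactorsFinset_iff.1 hc).1
      obtain ⟨x, hx⟩ := hcyc.nonempty_support
      have hxs : x ∈ s.support := by
        have h2 := (Equiv.Perm.mem_cycleFactorsFinset_iff.1 hc).2 x hx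
        rw [Equiv.Perm.mem_support] at hx ⊢
        rwa [h2] at hx
      refine ⟨⟦x⟧, ?_⟩
      simp only [classify, Quotient.lift_mk]
      rw [dif_pos hxs]
      simp only [Sum.inl.injEq, Subtype.mk.injEq]
      exact (Equiv.Perm.cycle_is_cycleOf hx hc).symm
    · refine ⟨⟦x⟧, ?_⟩
      simp only [classify, Quotient.lift_mk]
      rw [dif_neg hx]

lemma card_quotient_sameCycle (s : Equiv.Perm (Fin k)) :
    Nat.card (Quotient (SameCycle.setoid s)) =
      s.cycleType.card + (k - s.cycleType.sum) := by
  rw [Nat.card_eq_of_bijective _ (classify_bijective s)]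
  rw [Nat.card_sum, Nat.card_eq_fintype_card, Nat.card_eq_fintype_card,
    Fintype.card_coe, Equiv.Perm.sum_cycleType]
  congr 1
  · simp [Equiv.Perm.cycleType]
  · rw [Fintype.card_subtype_compl, Fintype.card_fin, Fintype.card_coe]

end Aux

/-- The result of applying the differential-operator word
`x_{α₁i₁}⋯x_{α_k i_k} ∂_{α₁ i_{σ(1)}}⋯∂_{α_k i_{σ(k)}}` (in the matrix coordinates
`x_{ab}`, `a, b ∈ S`) to a smooth function `f` of the matrix variables, evaluated at
the point `x`: first take the mixed partial derivative of `f` in the coordinate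
directions `(α_t, i_{σ(t)})` and then multiply by the coordinates `x_{α_t i_t}`. -/
noncomputable def matWord (S : Finset ℕ) (k : ℕ)
    (α i : Fin k → {a // a ∈ S}) (σ : Fin k → Fin k)
    (f : ({a // a ∈ S} → {a // a ∈ S} → ℝ) → ℝ)
    (x : {a // a ∈ S} → {a // a ∈ S} → ℝ) : ℝ :=
  (∏ t, x (α t) (i t)) *
    iteratedFDeriv ℝ k f x (fun t => Pi.single (α t) (Pi.single (i (σ t)) (1 : ℝ)))

/-- The state of `p^{#}_{ρ,I}` under the one-sided Plancherel character with parameter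
`γL`: applying `D(p^{#}_{ρ,I}) = ∑_{i,α : Fin k → I} x_{α₁i₁}⋯x_{α_k i_k}
∂_{α₁ i_{s(1)}}⋯∂_{α_k i_{s(k)}}` (where `s` is any permutation of cycle structure `ρ`,
`k = |ρ|`) to `exp(γL ∑_{a∈I}(x_{aa}−1))` and evaluating at `x_{ab} = δ_{ab}` yields
`|I|^{ℓ(ρ)} (γL)^{|ρ|}`, where `ℓ(ρ)` is the number of cycles of `s` including fixed
points, i.e. `s.cycleType.card + (k − s.cycleType.sum)`. -/
theorem statement12 (γ L : ℝ) (hγ : 0 < γ) (hL : 0 < L)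
    (I : Finset ℕ) (k : ℕ) (s : Equiv.Perm (Fin k)) :
    (∑ i : Fin k → {a // a ∈ I}, ∑ α : Fin k → {a // a ∈ I},
        matWord I k α i (fun t => s t)
          (fun x => Real.exp (γ * L * ∑ a, (x a a - 1)))
          (fun a b => if a = b then 1 else 0)) =
      (I.card : ℝ) ^ (s.cycleType.card + (k - s.cycleType.sum)) * (γ * L) ^ k := by
  classical
  set J := {a // a ∈ I}
  set g : (J → J → ℝ) →L[ℝ] ℝ :=
    (γ * L) • ∑ a : J, (ContinuousLinearMap.proj a).comp
      (ContinuousLinearMap.proj (R := ℝ) (φ := fun _ : J => J → ℝ) a) with hg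
  have hgapp : ∀ x : J → J → ℝ, g x = γ * L * ∑ a : J, x a a := by
    intro x
    simp [hg, ContinuousLinearMap.sum_apply]
  set c : ℝ := -(γ * L * (I.card : ℝ)) with hc
  have hf : (fun x : J → J → ℝ => Real.exp (γ * L * ∑ a, (x a a - 1)))
      = fun x => Real.exp (g x + c) := by
    funext x
    congr 1
    rw [hgapp, hc, Finset.sum_sub_distrib, Finset.sum_const, Finset.card_univ,
      Fintype.card_coe]
    ring
  set xid : J → J → ℝ := fun a b => if a = b then 1 else 0 with hxid
  have hgid : g xid + c = 0 := by
    rw [hgapp, hc, hxid]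
    simp only [if_pos rfl, Finset.sum_const, Finset.card_univ, nsmul_eq_mul, mul_one]
    rw [show (Fintype.card J : ℝ) = (I.card : ℝ) by rw [Fintype.card_coe]]
    simp
  have hgs : ∀ a b : J, g (Pi.single a (Pi.single b (1:ℝ)))
      = γ * L * (if a = b then 1 else 0) := by
    intro a b
    rw [hgapp]
    congr 1
    have hterm : ∀ u : J, (Pi.single a (Pi.single b (1:ℝ)) : J → J → ℝ) u u
        = if u = a then (if u = b then (1:ℝ) else 0) else 0 := by
      intro u
      rcases eq_or_ne u a with rfl | h
      · simp [Pi.single_apply]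
      · simp [Pi.single_apply, h]
    rw [Finset.sum_congr rfl fun u _ => hterm u, Finset.sum_ite_eq' Finset.univ a]
    simp
  have key : ∀ i α : Fin k → J,
      matWord I k α i (fun t => s t)
          (fun x => Real.exp (γ * L * ∑ a, (x a a - 1))) xid
        = (γ * L) ^ k * ∏ t, (if α t = i t ∧ α t = i (s t) then (1:ℝ) else 0) := by
    intro i α
    rw [matWord, hf, iter_exp_lin g c k xid _, hgid, Real.exp_zero, one_mul]
    simp only [hgs]
    rw [Finset.prod_mul_distrib, Finset.prod_const, Finset.card_univ, Fintype.card_fin,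
      ← mul_assoc, mul_comm _ ((γ*L)^k), mul_assoc, ← Finset.prod_mul_distrib]
    congr 1
    apply Finset.prod_congr rfl
    intro t _
    by_cases h1 : α t = i t <;> by_cases h2 : α t = i (s t) <;>
      simp [hxid, h1, h2]
  rw [Finset.sum_congr rfl (fun i _ => Finset.sum_congr rfl (fun α _ => key i α))]
  simp only [← Finset.mul_sum]
  rw [mul_comm]
  congr 1
  have inner : ∀ i : Fin k → J,
      (∑ α : Fin k → J, ∏ t, (if α t = i t ∧ α t = i (s t) then (1:ℝ) else 0))
        = ∏ t, (if i t = i (s t) then (1:ℝ) else 0) := by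
    intro i
    have h := Finset.prod_univ_sum (fun _ : Fin k => (Finset.univ : Finset J))
      (fun t a => if a = i t ∧ a = i (s t) then (1:ℝ) else 0)
    rw [Fintype.piFinset_univ] at h
    rw [← h]
    apply Finset.prod_congr rfl
    intro t _
    by_cases heq : i t = i (s t)
    · rw [if_pos heq, ← heq]
      simp
      rw [Finset.sum_eq_single (i t)] <;> simp +contextual
    · rw [if_neg heq]
      apply Finset.sum_eq_zero
      intro a _
      rw [if_neg]
      rintro ⟨rfl, h2⟩
      exact heq h2
  rw [Finset.sum_congr rfl (fun i _ => inner i)]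
  rw [Finset.sum_congr rfl fun i _ => Fintype.prod_boole (p := fun t => i t = i (s t))]
  refine (@Finset.natCast_card_filter _ ℝ _ _ (fun _ => Fintype.decidableForallFintype) _).symm.trans ?_
  rw [Finset.filter_congr_decidable]
  rw [← Fintype.card_subtype,
    card_fixed_fun s (J := J), card_quotient_sameCycle s, Fintype.card_coe]
  push_cast
  ring
end

section
/- For a single variable: for any positive integers l₁, l₂, (x^{l₁}∂^{l₁} − (γL)^{l₁})(x^{l₂}∂^{l₂} − (γL)^{l₂}) applied to exp(γL(x−1)) and evaluated at x = 1 equals l₁ l₂ (γL)^{l₁+l₂−1} + O(L^{l₁+l₂−2}) as L → ∞ (γ > 0 fixed). In particular x^k ∂^k exp(γL(x−1))|_{x=1} = (γL)^k. -/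
open Filter Finset


open Filter

/-- The operator `x^l ∂^l − c^l` acting on smooth functions of one real variable. -/
noncomputable def factOp (l : ℕ) (c : ℝ) (f : ℝ → ℝ) : ℝ → ℝ :=
  fun x => x ^ l * (deriv^[l] f) x - c ^ l * f x

lemma hE (c x : ℝ) : HasDerivAt (fun y : ℝ => Real.exp (c * (y - 1))) (c * Real.exp (c * (x - 1))) x := by
  have h : HasDerivAt (fun y : ℝ => c * (y - 1)) c x := by
    simpa using ((hasDerivAt_id x).sub_const 1).const_mul c
  simpa [mul_comm] using h.exp

lemma exp_iter (c : ℝ) : ∀ n : ℕ, deriv^[n] (fun x : ℝ => Real.exp (c * (x - 1))) =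
    fun x => c ^ n * Real.exp (c * (x - 1)) := by
  intro n
  induction n with
  | zero => funext x; simp
  | succ n ih =>
    rw [Function.iterate_succ_apply', ih]
    funext x
    rw [deriv_const_mul _ (hE c x).differentiableAt, (hE c x).deriv]
    ring

lemma key_sum (c x : ℝ) (m n : ℕ) :
    (∑ j ∈ range (n+1), (n.choose j : ℝ) * (m.descFactorial j : ℝ) * ((m - j : ℕ) : ℝ) * x ^ (m - j - 1) * c ^ (n - j))
      + c * ∑ j ∈ range (n+1), (n.choose j : ℝ) * (m.descFactorial j : ℝ) * x ^ (m - j) * c ^ (n - j)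
    = ∑ j ∈ range (n+2), ((n+1).choose j : ℝ) * (m.descFactorial j : ℝ) * x ^ (m - j) * c ^ (n + 1 - j) := by
  rw [Finset.sum_range_succ' (fun j => ((n+1).choose j : ℝ) * (m.descFactorial j : ℝ) * x ^ (m - j) * c ^ (n + 1 - j)) (n+1)]
  have split : ∀ i ∈ range (n+1),
      (((n+1).choose (i+1) : ℝ) * (m.descFactorial (i+1) : ℝ) * x ^ (m - (i+1)) * c ^ (n + 1 - (i+1)))
      = ((n.choose i : ℝ) * (m.descFactorial i : ℝ) * ((m - i : ℕ) : ℝ) * x ^ (m - i - 1) * c ^ (n - i))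
        + ((n.choose (i+1) : ℝ) * (m.descFactorial (i+1) : ℝ) * x ^ (m - (i+1)) * c ^ (n + 1 - (i+1))) := by
    intro i hi
    rw [Nat.choose_succ_succ, Nat.descFactorial_succ]
    have : n + 1 - (i+1) = n - i := by omega
    rw [this]
    push_cast
    have : m - (i+1) = m - i - 1 := by omega
    rw [this]
    ring
  rw [Finset.sum_congr rfl split, Finset.sum_add_distrib]
  rw [add_assoc]
  congr 1
  -- remaining: ∑ choose(n,i+1) terms + j=0 term = c * ∑
  have hT : (∑ i ∈ range (n+1), ((n.choose (i+1) : ℝ) * (m.descFactorial (i+1) : ℝ) * x ^ (m - (i+1)) * c ^ (n + 1 - (i+1))))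
      + ((n+1).choose 0 : ℝ) * (m.descFactorial 0 : ℝ) * x ^ (m - 0) * c ^ (n + 1 - 0)
      = ∑ j ∈ range (n+2), (n.choose j : ℝ) * (m.descFactorial j : ℝ) * x ^ (m - j) * c ^ (n + 1 - j) := by
    rw [Finset.sum_range_succ' (fun j => (n.choose j : ℝ) * (m.descFactorial j : ℝ) * x ^ (m - j) * c ^ (n + 1 - j)) (n+1)]
    simp
  rw [hT, Finset.sum_range_succ (fun j => (n.choose j : ℝ) * (m.descFactorial j : ℝ) * x ^ (m - j) * c ^ (n + 1 - j)) (n+1)]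
  have hz : (n.choose (n+1) : ℝ) = 0 := by simp
  rw [hz, zero_mul, zero_mul, zero_mul, add_zero, Finset.mul_sum]
  refine Finset.sum_congr rfl fun j hj => ?_
  have hj' : j ≤ n := by simpa [Nat.lt_succ_iff] using hj
  have : n + 1 - j = (n - j) + 1 := by omega
  rw [this, pow_succ]
  ring

lemma iter_formula (c a : ℝ) (m : ℕ) : ∀ n : ℕ,
    deriv^[n] (fun y : ℝ => a * ((y ^ m - 1) * Real.exp (c * (y - 1)))) =
    fun x => a * ((∑ j ∈ range (n+1), (n.choose j : ℝ) * (m.descFactorial j : ℝ) * x ^ (m - j) * c ^ (n - j))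
        - c ^ n) * Real.exp (c * (x - 1)) := by
  intro n
  induction n with
  | zero =>
    funext x
    simp [Finset.sum_range_one]
    ring
  | succ n ih =>
    rw [Function.iterate_succ_apply', ih]
    funext x
    have hterm : ∀ j : ℕ, HasDerivAt
        (fun y : ℝ => (n.choose j : ℝ) * (m.descFactorial j : ℝ) * y ^ (m - j) * c ^ (n - j))
        ((n.choose j : ℝ) * (m.descFactorial j : ℝ) * (((m - j : ℕ) : ℝ) * x ^ (m - j - 1)) * c ^ (n - j)) x := by
      intro j
      exact ((hasDerivAt_pow (m - j) x).const_mul _).mul_const _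
    have hF : HasDerivAt
        (fun y : ℝ => ∑ j ∈ range (n+1), (n.choose j : ℝ) * (m.descFactorial j : ℝ) * y ^ (m - j) * c ^ (n - j))
        (∑ j ∈ range (n+1), (n.choose j : ℝ) * (m.descFactorial j : ℝ) * (((m - j : ℕ) : ℝ) * x ^ (m - j - 1)) * c ^ (n - j)) x := by
      exact HasDerivAt.fun_sum (fun j _ => hterm j)
    have hfull : HasDerivAt
        (fun y : ℝ => a * ((∑ j ∈ range (n+1), (n.choose j : ℝ) * (m.descFactorial j : ℝ) * y ^ (m - j) * c ^ (n - j)) - c ^ n) * Real.exp (c * (y - 1)))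
        ((a * (∑ j ∈ range (n+1), (n.choose j : ℝ) * (m.descFactorial j : ℝ) * (((m - j : ℕ) : ℝ) * x ^ (m - j - 1)) * c ^ (n - j))) * Real.exp (c * (x - 1))
          + (a * ((∑ j ∈ range (n+1), (n.choose j : ℝ) * (m.descFactorial j : ℝ) * x ^ (m - j) * c ^ (n - j)) - c ^ n)) * (c * Real.exp (c * (x - 1)))) x := by
      exact ((hF.sub_const _).const_mul a).mul (hE c x)
    rw [hfull.deriv]
    have key := key_sum c x m n
    have expand : (∑ j ∈ range (n+1), (n.choose j : ℝ) * (m.descFactorial j : ℝ) * (((m - j : ℕ) : ℝ) * x ^ (m - j - 1)) * c ^ (n - j))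
        = ∑ j ∈ range (n+1), (n.choose j : ℝ) * (m.descFactorial j : ℝ) * ((m - j : ℕ) : ℝ) * x ^ (m - j - 1) * c ^ (n - j) := by
      refine Finset.sum_congr rfl fun j _ => by ring
    rw [expand]
    rw [pow_succ]
    linear_combination (a * Real.exp (c * (x - 1))) * key

lemma eval_one (c : ℝ) (l₁ l₂ : ℕ) :
    factOp l₁ c (factOp l₂ c (fun x => Real.exp (c * (x - 1)))) 1
      = c ^ l₂ * ((∑ j ∈ range (l₁+1), (l₁.choose j : ℝ) * (l₂.descFactorial j : ℝ) * c ^ (l₁ - j)) - c ^ l₁) := by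
  have h2 : factOp l₂ c (fun x => Real.exp (c * (x - 1)))
      = fun y : ℝ => c ^ l₂ * ((y ^ l₂ - 1) * Real.exp (c * (y - 1))) := by
    funext y
    simp only [factOp, exp_iter]
    ring
  rw [h2]
  simp only [factOp, iter_formula c (c ^ l₂) l₂ l₁]
  norm_num

lemma diff_eq (c : ℝ) (l₁ l₂ : ℕ) (h₁ : 1 ≤ l₁) :
    c ^ l₂ * ((∑ j ∈ range (l₁+1), (l₁.choose j : ℝ) * (l₂.descFactorial j : ℝ) * c ^ (l₁ - j)) - c ^ l₁)
      - (l₁ : ℝ) * l₂ * c ^ (l₁ + l₂ - 1)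
    = ∑ j ∈ Finset.Ico 2 (l₁+1), (l₁.choose j : ℝ) * (l₂.descFactorial j : ℝ) * c ^ (l₁ + l₂ - j) := by
  rw [Finset.range_eq_Ico,
    Finset.sum_eq_sum_Ico_succ_bot (by omega : 0 < l₁ + 1),
    Finset.sum_eq_sum_Ico_succ_bot (by omega : 1 < l₁ + 1)]
  have e1 : c ^ l₂ * c ^ (l₁ - 1) = c ^ (l₁ + l₂ - 1) := by
    rw [← pow_add]; congr 1; omega
  have e2 : ∀ j ∈ Finset.Ico 2 (l₁+1),
      (l₁.choose j : ℝ) * (l₂.descFactorial j : ℝ) * c ^ (l₁ + l₂ - j)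
      = c ^ l₂ * ((l₁.choose j : ℝ) * (l₂.descFactorial j : ℝ) * c ^ (l₁ - j)) := by
    intro j hj
    obtain ⟨hj2, hjl⟩ := Finset.mem_Ico.mp hj
    have : l₁ + l₂ - j = l₂ + (l₁ - j) := by omega
    rw [this, pow_add]; ring
  rw [Finset.sum_congr rfl e2, ← Finset.mul_sum]
  simp only [Nat.choose_zero_right, Nat.descFactorial_zero, Nat.choose_one_right,
    Nat.descFactorial_one, Nat.cast_one, Nat.sub_zero, one_mul]
  linear_combination ((l₁ : ℝ) * l₂) * e1

lemma final (γ : ℝ) (l₁ l₂ : ℕ) :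
    (fun L : ℝ => ∑ j ∈ Finset.Ico 2 (l₁+1),
        (l₁.choose j : ℝ) * (l₂.descFactorial j : ℝ) * (γ * L) ^ (l₁ + l₂ - j))
      =O[atTop] fun L : ℝ => L ^ (l₁ + l₂ - 2) := by
  refine Asymptotics.IsBigO.fun_sum fun j hj => ?_
  obtain ⟨hj2, hjl⟩ := Finset.mem_Ico.mp hj
  have hle : l₁ + l₂ - j ≤ l₁ + l₂ - 2 := by omega
  have base : (fun L : ℝ => L ^ (l₁ + l₂ - j)) =O[atTop] fun L : ℝ => L ^ (l₁ + l₂ - 2) := by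
    refine Asymptotics.IsBigO.of_bound 1 ?_
    filter_upwards [eventually_ge_atTop (1:ℝ)] with L hL
    rw [one_mul, Real.norm_eq_abs, Real.norm_eq_abs, abs_pow, abs_pow,
      abs_of_nonneg (by linarith : (0:ℝ) ≤ L)]
    exact pow_le_pow_right₀ hL hle
  have h := base.const_mul_left ((l₁.choose j : ℝ) * (l₂.descFactorial j : ℝ) * γ ^ (l₁ + l₂ - j))
  refine h.congr_left fun L => ?_
  rw [mul_pow]; ring

/-- For positive integers `l₁, l₂` and fixed `γ > 0`:
`(x^{l₁}∂^{l₁} − (γL)^{l₁})(x^{l₂}∂^{l₂} − (γL)^{l₂}) e^{γL(x−1)}|_{x=1}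
  = l₁l₂(γL)^{l₁+l₂−1} + O(L^{l₁+l₂−2})` as `L → ∞`;
in particular `x^k ∂^k e^{γL(x−1)}|_{x=1} = (γL)^k`. -/
theorem statement13 (γ : ℝ) (hγ : 0 < γ) (l₁ l₂ : ℕ) (h₁ : 1 ≤ l₁) (h₂ : 1 ≤ l₂) :
    (∀ L : ℝ, ∀ k : ℕ,
      (1 : ℝ) ^ k * (deriv^[k] fun x => Real.exp (γ * L * (x - 1))) 1 = (γ * L) ^ k) ∧
    (fun L : ℝ =>
        factOp l₁ (γ * L) (factOp l₂ (γ * L) fun x => Real.exp (γ * L * (x - 1))) 1 -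
          (l₁ : ℝ) * l₂ * (γ * L) ^ (l₁ + l₂ - 1)) =O[atTop]
      fun L : ℝ => L ^ (l₁ + l₂ - 2) := by
  constructor
  · intro L k
    rw [exp_iter]
    simp
  · have heq : (fun L : ℝ =>
        factOp l₁ (γ * L) (factOp l₂ (γ * L) fun x => Real.exp (γ * L * (x - 1))) 1 -
          (l₁ : ℝ) * l₂ * (γ * L) ^ (l₁ + l₂ - 1))
        = fun L : ℝ => ∑ j ∈ Finset.Ico 2 (l₁+1),
            (l₁.choose j : ℝ) * (l₂.descFactorial j : ℝ) * (γ * L) ^ (l₁ + l₂ - j) := by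
      funext L
      rw [eval_one, diff_eq _ _ _ h₁]
    rw [heq]
    exact final γ l₁ l₂
end

section
/- Graph lemma for ∂-regular words: let M be a monomial (word) in letters x_{ij}, ∂_{ij} that is a regular product of cyclic monomials C(1)⋯C(m), each C(l) of the form x_{α₁i₁}⋯x_{α_k i_k}∂_{α₁i₂}⋯∂_{α_k i₁} with coverage at least 2. Then the capacity of M (number of diagonal ∂-factors) satisfies cap(M) ≤ deg(M) − cov(M), where deg(M) is the number of x-factors and cov(M) is the number of distinct indices appearing in M. -/
/-- A letter of the alphabet `{x_{ij}, ∂_{ij}}`: `(true, i, j)` encodes `x_{ij}` and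
`(false, i, j)` encodes `∂_{ij}`. A word (monomial) is a list of letters, written
left to right; "to the right of a factor" means later in the list. -/
abbrev MonLetter := Bool × ℕ × ℕ

/-- The cyclic monomial `x_{α₁i₁}⋯x_{α_k i_k} ∂_{α₁i₂}⋯∂_{α_k i₁}` determined by the
index tuples `α, i : Fin k → ℕ` (the `∂`-indices are cyclically shifted). -/
def cycleWord (k : ℕ) (α i : Fin k → ℕ) : List MonLetter :=
  (List.ofFn fun t => ((true, α t, i t) : MonLetter)) ++
    (List.ofFn fun t : Fin k => ((false, α t, i (finRotate k t)) : MonLetter))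

/-- `deg`: the number of `x`-factors of a monomial. -/
def degW (w : List MonLetter) : ℕ := (w.filter fun a => a.1).length

/-- `cap` (capacity): the number of diagonal `∂`-factors `∂_{ii}` of a monomial. -/
def capW (w : List MonLetter) : ℕ :=
  (w.filter fun a => !a.1 && (a.2.1 == a.2.2)).length

/-- `cov` (coverage): the number of distinct indices appearing in a monomial. -/
def covW (w : List MonLetter) : ℕ :=
  ((w.map fun a => a.2.1) ++ (w.map fun a => a.2.2)).toFinset.card

/-- `∂`-regularity: for every factor `∂_{ij}` with `i ≠ j`, strictly more letters
`x_{ij}` than `∂_{ij}` occur to the right of it. -/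
def DRegular (w : List MonLetter) : Prop :=
  ∀ p : Fin w.length, (w.get p).1 = false → (w.get p).2.1 ≠ (w.get p).2.2 →
    (w.drop (p + 1)).count (false, (w.get p).2.1, (w.get p).2.2) <
      (w.drop (p + 1)).count (true, (w.get p).2.1, (w.get p).2.2)

/-- `x`-regularity: for every factor `x_{ij}` with `i ≠ j`, strictly more letters
`∂_{ij}` than `x_{ij}` occur to the left of it. -/
def XRegular (w : List MonLetter) : Prop :=
  ∀ p : Fin w.length, (w.get p).1 = true → (w.get p).2.1 ≠ (w.get p).2.2 →
    (w.take p).count (true, (w.get p).2.1, (w.get p).2.2) <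
      (w.take p).count (false, (w.get p).2.1, (w.get p).2.2)

/-! ### Auxiliary definitions and lemmas -/

/-- Number of nondiagonal `∂`-factors of a monomial. -/
def ndD (w : List MonLetter) : ℕ :=
  (w.filter fun a => !a.1 && !(a.2.1 == a.2.2)).length

/-- The set of indices appearing in a monomial. -/
def Sset (w : List MonLetter) : Finset ℕ :=
  ((w.map fun a => a.2.1) ++ (w.map fun a => a.2.2)).toFinset

lemma covW_eq_card_Sset (w : List MonLetter) : covW w = (Sset w).card := rfl

lemma Sset_append (A B : List MonLetter) : Sset (A ++ B) = Sset A ∪ Sset B := by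
  ext v; simp [Sset]; tauto

lemma mem_Sset_fst {a : MonLetter} {w : List MonLetter} (h : a ∈ w) : a.2.1 ∈ Sset w := by
  simp only [Sset, List.mem_toFinset, List.mem_append, List.mem_map]
  exact Or.inl ⟨a, h, rfl⟩

lemma mem_Sset_snd {a : MonLetter} {w : List MonLetter} (h : a ∈ w) : a.2.2 ∈ Sset w := by
  simp only [Sset, List.mem_toFinset, List.mem_append, List.mem_map]
  exact Or.inr ⟨a, h, rfl⟩

lemma Sset_cycleWord (k : ℕ) (α i : Fin k → ℕ) :
    Sset (cycleWord k α i) = (Finset.univ.image α) ∪ (Finset.univ.image i) := by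
  ext v
  simp only [Sset, cycleWord, List.map_append, List.map_ofFn, List.toFinset_append,
    Finset.mem_union, List.mem_toFinset, List.mem_ofFn, Finset.mem_image,
    Finset.mem_univ, true_and, Function.comp]
  constructor
  · rintro ((⟨t, ht⟩ | ⟨t, ht⟩) | (⟨t, ht⟩ | ⟨t, ht⟩))
    · exact Or.inl ⟨t, ht⟩
    · exact Or.inl ⟨t, ht⟩
    · exact Or.inr ⟨t, ht⟩
    · exact Or.inr ⟨finRotate k t, ht⟩
  · rintro (⟨t, ht⟩ | ⟨t, ht⟩)
    · exact Or.inl (Or.inl ⟨t, ht⟩)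
    · exact Or.inr (Or.inl ⟨t, ht⟩)

lemma finRotate_val {k : ℕ} (hk : 0 < k) (s : Fin k) :
    (finRotate k s).val = (s.val + 1) % k := by
  obtain ⟨k', rfl⟩ : ∃ k', k = k' + 1 := ⟨k - 1, by omega⟩
  rw [finRotate_succ_apply]
  rw [Fin.val_add, Fin.val_one']
  conv_rhs => rw [Nat.add_mod]
  rw [Nat.mod_eq_of_lt s.isLt]

open Fin.NatCast in
/-- A cyclic sequence taking at least two values has at least as many "jumps" as values. -/
lemma cyc_image_le {n : ℕ} {β : Type*} [DecidableEq β] (f : Fin (n+1) → β)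
    (h2 : 2 ≤ (Finset.image f Finset.univ).card) :
    (Finset.image f Finset.univ).card ≤
      (Finset.univ.filter fun p => f p ≠ f (p+1)).card := by
  have key : ∀ u ∈ Finset.image f Finset.univ, ∃ p, f p = u ∧ f (p+1) ≠ u := by
    intro u hu
    by_contra hno
    push_neg at hno
    obtain ⟨p₀, -, hp₀⟩ := Finset.mem_image.1 hu
    have hstep : ∀ j : ℕ, f (p₀ + (j : Fin (n+1))) = u := by
      intro j
      induction j with
      | zero => simpa using hp₀
      | succ j ih =>
          have hc : ((j+1 : ℕ) : Fin (n+1)) = (j : Fin (n+1)) + 1 := by push_cast; ring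
          rw [hc, ← add_assoc]
          exact hno _ ih
    have hall : ∀ q : Fin (n+1), f q = u := by
      intro q
      have h := hstep ((q - p₀).val)
      rwa [Fin.cast_val_eq_self, add_sub_cancel] at h
    have hsub : Finset.image f Finset.univ ⊆ {u} := by
      intro v hv
      obtain ⟨p, -, hp⟩ := Finset.mem_image.1 hv
      simp [← hp, hall p]
    have := Finset.card_le_card hsub
    simp at this
    omega
  classical
  set g : β → Fin (n+1) := fun u =>
    if h : ∃ p, f p = u ∧ f (p+1) ≠ u then h.choose else 0 with hg
  apply Finset.card_le_card_of_injOn g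
  · intro u hu
    have h := key u hu
    have hspec := h.choose_spec
    simp only [hg, dif_pos h]
    simp only [Finset.mem_coe, Finset.mem_filter, Finset.mem_univ, true_and]
    rw [hspec.1]
    exact hspec.2.symm
  · intro u hu v hv hgu
    have h1 := key u hu
    have h2 := key v hv
    have e1 : f (g u) = u := by simp only [hg, dif_pos h1]; exact h1.choose_spec.1
    have e2 : f (g v) = v := by simp only [hg, dif_pos h2]; exact h2.choose_spec.1
    rw [← e1, ← e2, hgu]

/-- The per-cycle bound: the number of indices of a cyclic monomial not covered by `Old`
is at most the number of its nondiagonal `∂`-steps, provided every nondiagonal `x`-step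
has both endpoints in `Old`. -/
lemma cycle_bound {k : ℕ} (hk : 0 < k) (α i : Fin k → ℕ) (Old : Finset ℕ)
    (Hx : ∀ t, α t ≠ i t → α t ∈ Old ∧ i t ∈ Old)
    (Hcov : 2 ≤ ((Finset.univ.image α) ∪ (Finset.univ.image i)).card) :
    (((Finset.univ.image α) ∪ (Finset.univ.image i)) \ Old).card
      ≤ (Finset.univ.filter fun t => α t ≠ i (finRotate k t)).card := by
  classical
  obtain ⟨n, hn⟩ : ∃ n, 2 * k = n + 1 := ⟨2 * k - 1, by omega⟩
  have hb : ∀ p : Fin (n+1), p.val / 2 < k := fun p => by have := p.isLt; omega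
  set u : Fin (n+1) → ℕ := fun p =>
    if p.val % 2 = 0 then i ⟨p.val / 2, hb p⟩ else α ⟨p.val / 2, hb p⟩ with hu
  set mk : ℕ → Option ℕ := fun v => if v ∈ Old then none else some v with hmk
  set f : Fin (n+1) → Option ℕ := fun p => mk (u p) with hf
  have hu_even : ∀ (p : Fin (n+1)), p.val % 2 = 0 → u p = i ⟨p.val / 2, hb p⟩ := by
    intro p hp; simp only [hu]; rw [if_pos hp]
  have hu_odd : ∀ (p : Fin (n+1)), p.val % 2 ≠ 0 → u p = α ⟨p.val / 2, hb p⟩ := by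
    intro p hp; simp only [hu]; rw [if_neg hp]
  have mk_ne : ∀ a b : ℕ, mk a ≠ mk b → a ≠ b := by
    rintro a b h rfl; exact h rfl
  have mk_old : ∀ a b : ℕ, a ∈ Old → b ∈ Old → mk a = mk b := by
    intro a b ha hb'; simp [hmk, ha, hb']
  have mk_some : ∀ a v : ℕ, mk a = some v → a = v := by
    intro a v h
    by_cases ha : a ∈ Old
    · simp [hmk, ha] at h
    · simp [hmk, ha] at h; exact h
  have hsucc : ∀ p : Fin (n+1), (p + 1).val = (p.val + 1) % (n+1) := by
    intro p
    rw [Fin.val_add, Fin.val_one', Nat.mod_eq_of_lt (a := 1) (by omega)]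
  have hIu : ∀ v ∈ (Finset.univ.image α) ∪ (Finset.univ.image i),
      ∃ p : Fin (n+1), u p = v := by
    intro v hv
    rcases Finset.mem_union.1 hv with hv | hv
    · obtain ⟨t, -, rfl⟩ := Finset.mem_image.1 hv
      refine ⟨⟨2 * t.val + 1, by have := t.isLt; omega⟩, ?_⟩
      rw [hu_odd _ (by show (2 * t.val + 1) % 2 ≠ 0; omega)]
      congr 1
      apply Fin.ext
      show (2 * t.val + 1) / 2 = t.val
      omega
    · obtain ⟨t, -, rfl⟩ := Finset.mem_image.1 hv
      refine ⟨⟨2 * t.val, by have := t.isLt; omega⟩, ?_⟩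
      rw [hu_even _ (by show (2 * t.val) % 2 = 0; omega)]
      congr 1
      apply Fin.ext
      show (2 * t.val) / 2 = t.val
      omega
  set J := Finset.image f Finset.univ with hJdef
  set D := Finset.univ.filter (fun p : Fin (n+1) => f p ≠ f (p+1)) with hDdef
  have hIJ : (((Finset.univ.image α) ∪ (Finset.univ.image i)) \ Old).card
      ≤ (J.erase none).card := by
    apply Finset.card_le_card_of_injOn (fun v => (some v : Option ℕ))
    · intro v hv
      obtain ⟨hvI, hvO⟩ := Finset.mem_sdiff.1 hv
      obtain ⟨p, hup⟩ := hIu v hvI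
      refine Finset.mem_erase.2 ⟨by simp, ?_⟩
      refine Finset.mem_image.2 ⟨p, Finset.mem_univ _, ?_⟩
      simp only [hf, hup, hmk]
      rw [if_neg hvO]
    · intro a _ b _ h
      exact Option.some_injective ℕ h
  have hDodd : ∀ p ∈ D, p.val % 2 = 1 := by
    intro p hp
    have hne : f p ≠ f (p + 1) := (Finset.mem_filter.1 hp).2
    by_contra hodd
    have heven : p.val % 2 = 0 := by omega
    have h1 : (p + 1).val = p.val + 1 := by
      rw [hsucc]
      apply Nat.mod_eq_of_lt
      have := p.isLt
      omega
    have hup : u p = i ⟨p.val / 2, hb p⟩ := hu_even p heven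
    have hup1 : u (p + 1) = α ⟨p.val / 2, hb p⟩ := by
      rw [hu_odd _ (by rw [h1]; omega)]
      congr 1
      apply Fin.ext
      show (p+1).val / 2 = p.val / 2
      rw [h1]; omega
    have hne' : i ⟨p.val / 2, hb p⟩ ≠ α ⟨p.val / 2, hb p⟩ := by
      apply mk_ne
      rw [← hup, ← hup1]
      exact hne
    obtain ⟨h1', h2'⟩ := Hx _ (Ne.symm hne')
    exact hne (by rw [hf]; exact mk_old _ _ (hup ▸ h2') (hup1 ▸ h1'))
  have hDT : D.card ≤ (Finset.univ.filter fun t : Fin k => α t ≠ i (finRotate k t)).card := by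
    apply Finset.card_le_card_of_injOn (fun p : Fin (n+1) => (⟨p.val / 2, hb p⟩ : Fin k))
    · intro p hp
      have hodd := hDodd p hp
      have hne : f p ≠ f (p + 1) := (Finset.mem_filter.1 hp).2
      set t : Fin k := ⟨p.val / 2, hb p⟩ with ht
      have hup : u p = α t := hu_odd p (by omega)
      have hup1 : u (p + 1) = i (finRotate k t) := by
        rcases Nat.lt_or_ge (p.val + 1) (n + 1) with hlt | hge
        · have h1 : (p + 1).val = p.val + 1 := by rw [hsucc]; exact Nat.mod_eq_of_lt hlt
          rw [hu_even _ (by rw [h1]; omega)]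
          congr 1
          apply Fin.ext
          rw [finRotate_val hk]
          show (p+1).val / 2 = (t.val + 1) % k
          rw [h1, ht, Nat.mod_eq_of_lt (by omega : p.val / 2 + 1 < k)]
          omega
        · have hpv : p.val + 1 = n + 1 := by have := p.isLt; omega
          have h1 : (p + 1).val = 0 := by rw [hsucc, hpv, Nat.mod_self]
          rw [hu_even _ (by rw [h1])]
          congr 1
          apply Fin.ext
          rw [finRotate_val hk]
          show (p+1).val / 2 = (t.val + 1) % k
          rw [h1, ht]
          have hke : p.val / 2 + 1 = k := by omega
          rw [hke, Nat.mod_self]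
      refine Finset.mem_filter.2 ⟨Finset.mem_univ _, ?_⟩
      apply mk_ne
      rw [← hup, ← hup1]
      exact hne
    · intro p hp q hq h
      have h1 := hDodd p hp
      have h2 := hDodd q hq
      have h3 : p.val / 2 = q.val / 2 := congrArg Fin.val h
      apply Fin.ext
      omega
  by_cases hJ2 : 2 ≤ J.card
  · calc (((Finset.univ.image α) ∪ (Finset.univ.image i)) \ Old).card
        ≤ (J.erase none).card := hIJ
      _ ≤ J.card := Finset.card_le_card (Finset.erase_subset _ _)
      _ ≤ D.card := cyc_image_le f hJ2
      _ ≤ _ := hDT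
  · rcases Finset.eq_empty_or_nonempty
        (((Finset.univ.image α) ∪ (Finset.univ.image i)) \ Old) with he | ⟨v, hv⟩
    · simp [he]
    · exfalso
      obtain ⟨hvI, hvO⟩ := Finset.mem_sdiff.1 hv
      obtain ⟨p, hup⟩ := hIu v hvI
      have hfp : f p = some v := by
        simp only [hf, hup, hmk]; rw [if_neg hvO]
      have hall : ∀ q, f q = some v := by
        intro q
        have hcard1 : J.card ≤ 1 := by omega
        have := Finset.card_le_one.1 hcard1 (f q)
          (Finset.mem_image.2 ⟨q, Finset.mem_univ _, rfl⟩) (f p)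
          (Finset.mem_image.2 ⟨p, Finset.mem_univ _, rfl⟩)
        rw [this, hfp]
      have hsub : ((Finset.univ.image α) ∪ (Finset.univ.image i)) ⊆ {v} := by
        intro w hw
        obtain ⟨q, hq⟩ := hIu w hw
        have := mk_some (u q) v (hall q)
        simp [← hq, this]
      have := Finset.card_le_card hsub
      simp at this
      omega

lemma countP_ofFn {γ : Type*} {n : ℕ} (g : Fin n → γ) (p : γ → Bool) :
    ((List.ofFn g).countP p) = (Finset.univ.filter fun t => p (g t)).card := by
  induction n with
  | zero => simp
  | succ n ih =>
      rw [List.ofFn_succ, List.countP_cons, ih]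
      rw [Finset.card_filter, Finset.card_filter, Fin.sum_univ_succ]
      simp [add_comm]

lemma length_filter_ofFn {γ : Type*} {n : ℕ} (g : Fin n → γ) (p : γ → Bool) :
    ((List.ofFn g).filter p).length = (Finset.univ.filter fun t => p (g t)).card := by
  rw [← List.countP_eq_length_filter]
  exact countP_ofFn g p

lemma degW_cycleWord (k : ℕ) (α i : Fin k → ℕ) : degW (cycleWord k α i) = k := by
  simp only [degW, cycleWord, List.filter_append, List.length_append, length_filter_ofFn]
  simp

lemma capW_cycleWord (k : ℕ) (α i : Fin k → ℕ) :
    capW (cycleWord k α i)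
      = (Finset.univ.filter fun t => α t = i (finRotate k t)).card := by
  simp only [capW, cycleWord, List.filter_append, List.length_append, length_filter_ofFn]
  simp

lemma ndD_cycleWord (k : ℕ) (α i : Fin k → ℕ) :
    ndD (cycleWord k α i)
      = (Finset.univ.filter fun t => α t ≠ i (finRotate k t)).card := by
  simp only [ndD, cycleWord, List.filter_append, List.length_append, length_filter_ofFn]
  simp

lemma cap_add_ndD (k : ℕ) (α i : Fin k → ℕ) :
    capW (cycleWord k α i) + ndD (cycleWord k α i) = k := by
  rw [capW_cycleWord, ndD_cycleWord]
  rw [Finset.card_filter_add_card_filter_not]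
  simp

lemma length_filter_flatten (p : MonLetter → Bool) (cs : List (List MonLetter)) :
    ((cs.flatten).filter p).length = (cs.map fun c => (c.filter p).length).sum := by
  rw [← List.countP_eq_length_filter, List.countP_flatten]
  congr 1
  apply List.map_congr_left
  intro c _
  exact List.countP_eq_length_filter

lemma union_bound (ndF : List MonLetter → ℕ) :
    ∀ (cs : List (List MonLetter)) (Old : Finset ℕ),
    (∀ A c B, cs = A ++ c :: B → (Sset c \ (Old ∪ Sset A.flatten)).card ≤ ndF c) →
    (Old ∪ Sset cs.flatten).card ≤ Old.card + (cs.map ndF).sum := by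
  intro cs
  induction cs with
  | nil => intro Old h; simp [Sset]
  | cons c rest ih =>
      intro Old h
      have h1 : (Sset c \ Old).card ≤ ndF c := by
        have := h [] c rest rfl
        simpa [Sset] using this
      have h2 := ih (Old ∪ Sset c) (fun A c' B hsplit => by
        have := h (c :: A) c' B (by rw [hsplit]; rfl)
        rw [List.flatten_cons, Sset_append] at this
        rwa [Finset.union_assoc])
      have h3 : (Old ∪ Sset c).card ≤ Old.card + ndF c := by
        rw [Finset.union_comm, ← Finset.card_sdiff_add_card]
        omega
      calc (Old ∪ Sset (c :: rest).flatten).card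
          = ((Old ∪ Sset c) ∪ Sset rest.flatten).card := by
            rw [List.flatten_cons, Sset_append, Finset.union_assoc]
        _ ≤ (Old ∪ Sset c).card + (rest.map ndF).sum := h2
        _ ≤ (Old.card + ndF c) + (rest.map ndF).sum := by omega
        _ = Old.card + ((c :: rest).map ndF).sum := by simp [add_assoc]

lemma mem_Sset_of_XRegular {w : List MonLetter} (hx : XRegular w)
    (P Q : List MonLetter) {k : ℕ} (α i : Fin k → ℕ)
    (hw : w = P ++ (cycleWord k α i ++ Q)) (t : Fin k) (hne : α t ≠ i t) :
    α t ∈ Sset P ∧ i t ∈ Sset P := by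
  have hwl : w.length = P.length + ((k + k) + Q.length) := by
    rw [hw]; simp [cycleWord]; omega
  have hplt : P.length + t.val < w.length := by
    have := t.isLt; omega
  have hclen : (cycleWord k α i).length = k + k := by simp [cycleWord]
  have hget : w.get ⟨P.length + t.val, hplt⟩ = (true, α t, i t) := by
    rw [List.get_eq_getElem]
    show w[P.length + t.val]'hplt = _
    rw [List.getElem_of_eq hw]
    rw [List.getElem_append_right (by omega)]
    simp only [Nat.add_sub_cancel_left]
    rw [List.getElem_append_left (by rw [hclen]; have := t.isLt; omega)]
    show (cycleWord k α i)[t.val]'_ = _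
    unfold cycleWord
    rw [List.getElem_append_left (by simp [t.isLt])]
    rw [List.getElem_ofFn]
  have htake : w.take (P.length + t.val)
      = P ++ (List.ofFn fun s => ((true, α s, i s) : MonLetter)).take t.val := by
    rw [hw, List.take_append,
      List.take_of_length_le (by omega : P.length ≤ P.length + t.val)]
    simp only [Nat.add_sub_cancel_left]
    congr 1
    rw [List.take_append]
    have h0 : t.val - (cycleWord k α i).length = 0 := by rw [hclen]; have := t.isLt; omega
    rw [h0, List.take_zero, List.append_nil]
    unfold cycleWord
    rw [List.take_append_of_le_length (by simp)]
  have h := hx ⟨P.length + t.val, hplt⟩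
  rw [hget] at h
  have h2 := h rfl hne
  rw [show ((⟨P.length + t.val, hplt⟩ : Fin w.length) : ℕ) = P.length + t.val from rfl,
    htake] at h2
  rw [List.count_append, List.count_append] at h2
  dsimp only at h2
  have hc0 : ((List.ofFn fun s => ((true, α s, i s) : MonLetter)).take t.val).count
      ((false, α t, i t) : MonLetter) = 0 := by
    rw [List.count_eq_zero]
    intro hmem
    have hmem' := List.mem_of_mem_take hmem
    rw [List.mem_ofFn] at hmem'
    obtain ⟨s, hs⟩ := hmem'
    simp at hs
  have hmemP : ((false, α t, i t) : MonLetter) ∈ P := by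
    rw [← List.count_pos_iff]
    omega
  exact ⟨mem_Sset_fst hmemP, mem_Sset_snd hmemP⟩

/-- Graph lemma for regular words: if the monomial `M = C(1)⋯C(m)` is a regular
product of cyclic monomials, each of coverage at least `2`, then
`cap(M) ≤ deg(M) − cov(M)`. -/
theorem statement16 (m : ℕ) (hm : 1 ≤ m) (k : Fin m → ℕ) (hk : ∀ l, 1 ≤ k l)
    (α i : (l : Fin m) → Fin (k l) → ℕ)
    (hcov : ∀ l, 2 ≤ covW (cycleWord (k l) (α l) (i l)))
    (w : List MonLetter)
    (hw : w = (List.ofFn fun l => cycleWord (k l) (α l) (i l)).flatten)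
    (hreg : DRegular w ∧ XRegular w) :
    capW w + covW w ≤ degW w := by
  classical
  obtain ⟨-, hX⟩ := hreg
  set cs : List (List MonLetter) := List.ofFn (fun l => cycleWord (k l) (α l) (i l)) with hcs
  have hdeg : degW w = ∑ l, k l := by
    rw [hw]
    show ((cs.flatten).filter fun a => a.1).length = _
    rw [length_filter_flatten, hcs, List.map_ofFn, List.sum_ofFn]
    apply Finset.sum_congr rfl
    intro l _
    exact degW_cycleWord _ _ _
  have hcap : capW w = ∑ l, capW (cycleWord (k l) (α l) (i l)) := by
    rw [hw]
    show ((cs.flatten).filter fun a => !a.1 && (a.2.1 == a.2.2)).length = _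
    rw [length_filter_flatten, hcs, List.map_ofFn, List.sum_ofFn]
    rfl
  have hndsum : (cs.map ndD).sum = ∑ l, ndD (cycleWord (k l) (α l) (i l)) := by
    rw [hcs, List.map_ofFn, List.sum_ofFn]
    rfl
  have hsplits : ∀ A c B, cs = A ++ c :: B →
      (Sset c \ ((∅ : Finset ℕ) ∪ Sset A.flatten)).card ≤ ndD c := by
    intro A c B hsplit
    have hlen : cs.length = m := by rw [hcs]; simp
    have hAlt : A.length < m := by
      rw [← hlen, hsplit]
      simp
    set l : Fin m := ⟨A.length, hAlt⟩ with hl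
    have hc : c = cycleWord (k l) (α l) (i l) := by
      have hlt : A.length < cs.length := by omega
      have h1 : cs[A.length]'hlt = c := by
        rw [List.getElem_of_eq hsplit, List.getElem_append_right (le_refl A.length)]
        simp
      have h2 : cs[A.length]'hlt = cycleWord (k l) (α l) (i l) := by
        rw [List.getElem_of_eq hcs, List.getElem_ofFn]
      rw [← h1]
      exact h2
    have hwPQ : w = A.flatten ++ (cycleWord (k l) (α l) (i l) ++ B.flatten) := by
      rw [hw]
      show cs.flatten = _
      rw [hsplit, List.flatten_append, List.flatten_cons, hc]
    rw [hc, Sset_cycleWord, ndD_cycleWord]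
    simp only [Finset.empty_union]
    apply cycle_bound (hk l)
    · intro t hne
      exact mem_Sset_of_XRegular hX A.flatten B.flatten (α l) (i l) hwPQ t hne
    · have h2 := hcov l
      rwa [covW_eq_card_Sset, Sset_cycleWord] at h2
  have hcovb : covW w ≤ (cs.map ndD).sum := by
    have := union_bound ndD cs ∅ hsplits
    rw [covW_eq_card_Sset, hw]
    show (Sset cs.flatten).card ≤ _
    simpa using this
  have hfinal : capW w + (cs.map ndD).sum = ∑ l, k l := by
    rw [hcap, hndsum, ← Finset.sum_add_distrib]
    apply Finset.sum_congr rfl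
    intro l _
    exact cap_add_ndD _ _ _
  omega
end

section
/- Graph-counting lemma: let G be a finite directed multigraph with two edge types (x-edges and ∂-edges, possibly loops), obtained by gluing n cycles C(1),…,C(n) at vertices, and suppose G is ∂-regular (for each ordered pair of distinct vertices (a,b) and each ∂-edge from a to b, in the linear order on edges there are strictly more x-edges from a to b than ∂-edges from a to b among earlier edges). Then the number of vertices of G is at most the number of non-degenerate (non-loop) x-edges of G. -/
/-- The number of non-degenerate (non-loop) `x`-edges of the graph of a word. -/
def exW (w : List MonLetter) : ℕ :=
  (w.filter fun a => a.1 && !(a.2.1 == a.2.2)).length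

open Fin.NatCast in


lemma cycle_count {m : ℕ} (α i : Fin (m+1) → ℕ)
    (hcov : 2 ≤ ((Finset.univ.image α) ∪ (Finset.univ.image i)).card)
    (V : Finset ℕ)
    (hd : ∀ t, α t ≠ i (t+1) → α t ∈ V ∧ i (t+1) ∈ V) :
    (((Finset.univ.image α) ∪ (Finset.univ.image i)) \ V).card
      ≤ ∑ t, if α t = i t then 0 else 1 := by
  classical
  set Vc := (Finset.univ.image α) ∪ (Finset.univ.image i) with hVc
  set N := Vc \ V with hN
  set degX : ℕ → ℕ := fun a => ∑ t, if α t = i t then 0 else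
    ((if a = α t then 1 else 0) + (if a = i t then 1 else 0)) with hdegX
  have step1 : ∀ a ∈ N, 2 ≤ degX a := by
    intro a haN
    have haVc : a ∈ Vc := (Finset.mem_sdiff.mp haN).1
    have haV : a ∉ V := (Finset.mem_sdiff.mp haN).2
    have hdmem : ∀ t, α t ≠ i (t+1) → a ≠ α t ∧ a ≠ i (t+1) := by
      intro t ht
      obtain ⟨h1, h2⟩ := hd t ht
      exact ⟨fun e => haV (e ▸ h1), fun e => haV (e ▸ h2)⟩
    -- evenness
    have hkey : degX a
        + (∑ t, if α t = i (t+1) then 0 else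
            ((if a = α t then 1 else 0) + (if a = i (t+1) then 1 else 0)))
        + ((∑ t, if α t = i t then
            ((if a = α t then 1 else 0) + (if a = i t then 1 else 0)) else 0)
          + (∑ t, if α t = i (t+1) then
            ((if a = α t then 1 else 0) + (if a = i (t+1) then 1 else 0)) else 0))
        = (∑ t, ((if a = α t then 1 else 0) + (if a = i t then 1 else 0)))
          + (∑ t, ((if a = α t then 1 else 0) + (if a = i (t+1) then 1 else 0))) := by
      rw [hdegX]
      rw [← Finset.sum_add_distrib, ← Finset.sum_add_distrib, ← Finset.sum_add_distrib,
        ← Finset.sum_add_distrib]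
      refine Finset.sum_congr rfl fun t _ => ?_
      split_ifs <;> omega
    have hD0 : (∑ t, if α t = i (t+1) then 0 else
        ((if a = α t then 1 else 0) + (if a = i (t+1) then 1 else 0))) = 0 := by
      refine Finset.sum_eq_zero fun t _ => ?_
      by_cases h2 : α t = i (t+1)
      · simp [h2]
      · obtain ⟨h1, h2'⟩ := hdmem t h2
        simp [h1, h2', if_neg]
    have htotal : Even ((∑ t, ((if a = α t then 1 else 0) + (if a = i t then 1 else 0)))
        + (∑ t, ((if a = α t then 1 else 0) + (if a = i (t+1) then 1 else 0)))) := by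
      have hrot : (∑ t : Fin (m+1), (if a = i (t+1) then 1 else 0))
          = ∑ t : Fin (m+1), (if a = i t then 1 else 0) :=
        Fintype.sum_equiv (Equiv.addRight (1 : Fin (m+1))) _ _ (fun t => rfl)
      rw [Finset.sum_add_distrib, Finset.sum_add_distrib, hrot]
      refine ⟨(∑ t : Fin (m+1), (if a = α t then 1 else 0))
        + ∑ t : Fin (m+1), (if a = i t then 1 else 0), by ring⟩
    have hloop : Even ((∑ t, if α t = i t then
            ((if a = α t then 1 else 0) + (if a = i t then 1 else 0)) else 0)
          + (∑ t, if α t = i (t+1) then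
            ((if a = α t then 1 else 0) + (if a = i (t+1) then 1 else 0)) else 0)) := by
      have hgen : ∀ (u v : Fin (m+1) → ℕ),
          (∀ t, u t = v t ∨ u t = 0) →
          False ∨ True := fun _ _ _ => Or.inr trivial
      have e1 : (∑ t, if α t = i t then
            ((if a = α t then 1 else 0) + (if a = i t then 1 else 0)) else 0)
          = ∑ t, if α t = i t then 2 * (if a = α t then 1 else 0) else 0 := by
        refine Finset.sum_congr rfl fun t _ => ?_
        split_ifs <;> omega
      have e2 : (∑ t, if α t = i (t+1) then
            ((if a = α t then 1 else 0) + (if a = i (t+1) then 1 else 0)) else 0)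
          = ∑ t, if α t = i (t+1) then 2 * (if a = α t then 1 else 0) else 0 := by
        refine Finset.sum_congr rfl fun t _ => ?_
        split_ifs <;> omega
      rw [e1, e2]
      have hev : ∀ (f : Fin (m+1) → Prop) (_ : DecidablePred f) (g : Fin (m+1) → ℕ),
          Even (∑ t, if f t then 2 * g t else 0) := by
        intro f inst g
        refine ⟨∑ t, if f t then g t else 0, ?_⟩
        rw [← Finset.sum_add_distrib]
        refine Finset.sum_congr rfl fun t _ => ?_
        split_ifs <;> omega
      exact (hev _ _ _).add (hev _ _ _)
    have heven : Even (degX a) := by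
      rw [hD0, add_zero] at hkey
      rw [← hkey] at htotal
      exact (Nat.even_add.mp htotal).mpr hloop
    -- positivity
    have hpos : degX a ≠ 0 := by
      intro h0
      have hx : ∀ t, (a = α t ∨ a = i t) → α t = i t := by
        intro t hat
        by_contra hne
        have := Finset.sum_eq_zero_iff.mp h0 t (Finset.mem_univ t)
        rw [if_neg hne] at this
        rcases hat with h | h <;> simp [h] at this
      have hαa : ∀ t, i t = a → α t = a := by
        intro t ht
        by_cases h1 : α t = i t
        · rw [h1, ht]
        · exact absurd (hx t (Or.inr ht.symm)) h1
      have hi : ∀ t, i t = a → i (t+1) = a := by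
        intro t ht
        have hα := hαa t ht
        by_cases h2 : α t = i (t+1)
        · rw [← h2, hα]
        · exact absurd hα.symm (hdmem t h2).1
      have ht0 : ∃ t0, i t0 = a := by
        rw [hVc] at haVc
        rcases Finset.mem_union.mp haVc with h | h
        · obtain ⟨t, _, ht⟩ := Finset.mem_image.mp h
          exact ⟨t, (hx t (Or.inl ht.symm)) ▸ ht⟩
        · obtain ⟨t, _, ht⟩ := Finset.mem_image.mp h
          exact ⟨t, ht⟩
      obtain ⟨t0, ht0⟩ := ht0
      have hstep : ∀ j : ℕ, i (t0 + j) = a := by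
        intro j
        induction j with
        | zero => simpa using ht0
        | succ j ihj =>
          have hc : ((j+1 : ℕ) : Fin (m+1)) = (j : Fin (m+1)) + 1 := by
            push_cast; ring
          rw [hc, ← add_assoc]
          exact hi _ ihj
      have hall : ∀ s, i s = a := by
        intro s
        have := hstep ((s - t0 : Fin (m+1)) : ℕ)
        rwa [Fin.cast_val_eq_self, add_sub_cancel] at this
      have hallα : ∀ s, α s = a := fun s => hαa s (hall s)
      have hsub : Vc ⊆ {a} := by
        intro b hb
        rw [hVc] at hb
        simp only [Finset.mem_union, Finset.mem_image] at hb
        rcases hb with ⟨t, _, ht⟩ | ⟨t, _, ht⟩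
        · simp [← ht, hallα t]
        · simp [← ht, hall t]
      have := Finset.card_le_card hsub
      simp at this
      omega
    rcases heven with ⟨c, hc⟩
    omega
  have step2 : ∑ a ∈ N, degX a ≤ ∑ t, if α t = i t then 0 else 2 := by
    rw [hdegX, Finset.sum_comm]
    refine Finset.sum_le_sum fun t _ => ?_
    by_cases h1 : α t = i t
    · simp [h1]
    · simp only [if_neg h1]
      have hsum : ∑ a ∈ N, ((if a = α t then 1 else 0) + (if a = i t then 1 else 0))
          = (if α t ∈ N then 1 else 0) + (if i t ∈ N then 1 else 0) := by
        rw [Finset.sum_add_distrib, Finset.sum_ite_eq' N (α t) (fun _ => 1),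
          Finset.sum_ite_eq' N (i t) (fun _ => 1)]
      rw [hsum]
      have h2 : (if α t ∈ N then 1 else 0) ≤ 1 := by split <;> omega
      have h3 : (if i t ∈ N then 1 else 0) ≤ 1 := by split <;> omega
      omega
  have hlow : N.card * 2 ≤ ∑ a ∈ N, degX a := by
    calc N.card * 2 = ∑ _a ∈ N, 2 := by rw [Finset.sum_const, smul_eq_mul]
    _ ≤ ∑ a ∈ N, degX a := Finset.sum_le_sum step1
  have hhigh : (∑ t, if α t = i t then 0 else 2)
      = 2 * ∑ t, if α t = i t then 0 else 1 := by
    rw [Finset.mul_sum]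
    refine Finset.sum_congr rfl fun t _ => ?_
    split_ifs <;> omega
  omega

def idxL (w : List MonLetter) : List ℕ := (w.map fun a => a.2.1) ++ (w.map fun a => a.2.2)

lemma covW_eq (w : List MonLetter) : covW w = (idxL w).toFinset.card := rfl

lemma exW_append (u v : List MonLetter) : exW (u ++ v) = exW u + exW v := by
  simp [exW, List.filter_append]

lemma idx_toFinset_append (u v : List MonLetter) :
    (idxL (u ++ v)).toFinset = (idxL u).toFinset ∪ (idxL v).toFinset := by
  ext a; simp [idxL]; tauto

lemma covW_append_le (u v : List MonLetter) :
    covW (u ++ v) ≤ ((idxL u).toFinset \ (idxL v).toFinset).card + covW v := by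
  rw [covW_eq, covW_eq, idx_toFinset_append, ← Finset.card_sdiff_add_card]

lemma DRegular_suffix {u v : List MonLetter} (h : DRegular (u ++ v)) : DRegular v := by
  intro p hp hne
  have hlen : u.length + (p : ℕ) < (u ++ v).length := by
    rw [List.length_append]; omega
  have hget : ((u ++ v).get ⟨u.length + p, hlen⟩) = v.get p := by
    simp only [List.get_eq_getElem]
    rw [List.getElem_append_right (by omega)]
    congr 1
    omega
  have hdrop : (u ++ v).drop (u.length + (p : ℕ) + 1) = v.drop ((p : ℕ) + 1) := by
    rw [add_assoc, List.drop_length_add_append]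
  have := h ⟨u.length + p, hlen⟩ (by rw [hget]; exact hp) (by rw [hget]; exact hne)
  rw [hget] at this
  simpa [hdrop] using this

lemma covW_cycle (k : ℕ) (α i : Fin k → ℕ) :
    (idxL (cycleWord k α i)).toFinset = (Finset.univ.image α) ∪ (Finset.univ.image i) := by
  ext a
  simp only [idxL, cycleWord, List.map_append, List.toFinset_append, List.map_ofFn,
    Finset.mem_union, List.mem_toFinset, List.mem_ofFn, Set.mem_range, Function.comp,
    Finset.mem_image, Finset.mem_univ, true_and]
  constructor
  · rintro ((⟨t, ht⟩ | ⟨t, ht⟩) | (⟨t, ht⟩ | ⟨t, ht⟩))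
    · exact Or.inl ⟨t, ht⟩
    · exact Or.inl ⟨t, ht⟩
    · exact Or.inr ⟨t, ht⟩
    · exact Or.inr ⟨finRotate k t, ht⟩
  · rintro (⟨t, ht⟩ | ⟨t, ht⟩)
    · exact Or.inl (Or.inl ⟨t, ht⟩)
    · exact Or.inr (Or.inl ⟨t, ht⟩)

lemma exW_cycle (k : ℕ) (α i : Fin k → ℕ) :
    exW (cycleWord k α i) = ∑ t, if α t = i t then 0 else 1 := by
  classical
  rw [exW, cycleWord, List.filter_append, List.length_append]
  rw [List.ofFn_eq_map, List.ofFn_eq_map, List.filter_map, List.filter_map,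
    List.length_map, List.length_map]
  have h2 : (List.filter ((fun (a : MonLetter) => a.1 && !(a.2.1 == a.2.2)) ∘
      (fun t : Fin k => ((false, α t, i (finRotate k t)) : MonLetter))) (List.finRange k)) = [] := by
    apply List.filter_eq_nil_iff.mpr
    intro t _
    simp
  rw [h2]
  simp only [List.length_nil, add_zero]
  rw [List.filter_congr (fun (t : Fin k) _ => by
    simp : ∀ (t : Fin k) (_ : t ∈ List.finRange k),
      ((fun (a : MonLetter) => a.1 && !(a.2.1 == a.2.2)) ∘
        (fun t : Fin k => ((true, α t, i t) : MonLetter))) t = !(α t == i t))]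
  rw [← List.countP_eq_length_filter]
  have hgen : ∀ (l : List (Fin k)), l.countP (fun t => !(α t == i t))
      = (l.map (fun t => if α t = i t then 0 else 1)).sum := by
    intro l
    induction l with
    | nil => simp
    | cons x xs ih =>
      by_cases h : α x = i x <;> simp [List.countP_cons, h, ih] <;> omega
  rw [hgen, ← List.ofFn_eq_map, List.sum_ofFn]

lemma cycle_getElem (k : ℕ) (α i : Fin k → ℕ) (t : Fin k)
    (h : k + (t : ℕ) < (cycleWord k α i).length) :
    (cycleWord k α i)[k + (t : ℕ)] = ((false, α t, i (finRotate k t)) : MonLetter) := by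
  rw [List.getElem_of_eq (show cycleWord k α i = (List.ofFn fun t => ((true, α t, i t) : MonLetter)) ++ (List.ofFn fun t : Fin k => ((false, α t, i (finRotate k t)) : MonLetter)) from rfl)]
  rw [List.getElem_append_right (by simp : (List.ofFn fun t => ((true, α t, i t) : MonLetter)).length ≤ k + (t : ℕ))]
  rw [List.getElem_ofFn]
  have he : (⟨k + (t : ℕ) - (List.ofFn fun t => ((true, α t, i t) : MonLetter)).length, by
      simp⟩ : Fin k) = t := by
    apply Fin.ext
    simp
  rw [he]

lemma dmem (k : ℕ) (α i : Fin k → ℕ) (v : List MonLetter)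
    (hreg : DRegular (cycleWord k α i ++ v)) (t : Fin k)
    (hne : α t ≠ i (finRotate k t)) :
    ((true, α t, i (finRotate k t)) : MonLetter) ∈ v := by
  have hclen : (cycleWord k α i).length = k + k := by simp [cycleWord]
  have hkt : (t : ℕ) < k := t.isLt
  have hp : k + (t : ℕ) < (cycleWord k α i ++ v).length := by
    rw [List.length_append, hclen]; omega
  have hget : ((cycleWord k α i ++ v).get ⟨k + (t : ℕ), hp⟩)
      = ((false, α t, i (finRotate k t)) : MonLetter) := by
    simp only [List.get_eq_getElem]
    rw [List.getElem_append_left (by omega : k + (t : ℕ) < (cycleWord k α i).length)]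
    exact cycle_getElem k α i t (by omega)
  have hcount := hreg ⟨k + (t : ℕ), hp⟩ (by rw [hget]) (by rw [hget]; exact hne)
  rw [hget] at hcount
  simp only at hcount
  have hmem : ((true, α t, i (finRotate k t)) : MonLetter)
      ∈ (cycleWord k α i ++ v).drop (k + (t : ℕ) + 1) := by
    apply List.count_pos_iff.mp
    omega
  have hdrop : (cycleWord k α i ++ v).drop (k + (t : ℕ) + 1)
      = (cycleWord k α i).drop (k + (t : ℕ) + 1) ++ v := by
    apply List.drop_append_of_le_length
    omega
  rw [hdrop, List.mem_append] at hmem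
  rcases hmem with hmem | hmem
  · exfalso
    have hdrop2 : (cycleWord k α i).drop (k + (t : ℕ) + 1)
        = (List.ofFn fun t : Fin k => ((false, α t, i (finRotate k t)) : MonLetter)).drop ((t : ℕ) + 1) := by
      rw [cycleWord]
      have : k + (t : ℕ) + 1 = (List.ofFn fun t => ((true, α t, i t) : MonLetter)).length + ((t : ℕ) + 1) := by
        simp; omega
      rw [this, List.drop_length_add_append]
    rw [hdrop2] at hmem
    have := List.mem_of_mem_drop hmem
    rw [List.mem_ofFn] at this
    obtain ⟨s, hs⟩ := this
    simp at hs
  · exact hmem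

lemma main_lemma (L : List (List MonLetter))
    (hL : ∀ c ∈ L, ∃ k, ∃ α i : Fin k → ℕ, c = cycleWord k α i ∧ 2 ≤ covW c)
    (hreg : DRegular L.flatten) : covW L.flatten ≤ exW L.flatten := by
  induction L with
  | nil => simp [covW, exW]
  | cons c rest ih =>
    rw [List.flatten_cons]
    rw [List.flatten_cons] at hreg
    obtain ⟨k, α, i, hc, hcov⟩ := hL c List.mem_cons_self
    subst hc
    have hreg' : DRegular rest.flatten := DRegular_suffix hreg
    have ih' := ih (fun c hc => hL c (List.mem_cons_of_mem _ hc)) hreg'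
    rcases k with _ | m
    · exfalso
      revert hcov
      simp [covW, cycleWord]
    · set V := (idxL rest.flatten).toFinset with hV
      have hd : ∀ t : Fin (m+1), α t ≠ i (t+1) → α t ∈ V ∧ i (t+1) ∈ V := by
        intro t ht
        have hne : α t ≠ i (finRotate (m+1) t) := by rwa [finRotate_succ_apply]
        have hmem := dmem (m+1) α i rest.flatten hreg t hne
        rw [finRotate_succ_apply] at hmem
        constructor
        · rw [hV]
          apply List.mem_toFinset.mpr
          apply List.mem_append_left
          exact List.mem_map.mpr ⟨_, hmem, rfl⟩
        · rw [hV]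
          apply List.mem_toFinset.mpr
          apply List.mem_append_right
          exact List.mem_map.mpr ⟨_, hmem, rfl⟩
      have hcov' : 2 ≤ ((Finset.univ.image α) ∪ (Finset.univ.image i)).card := by
        rw [covW_eq, covW_cycle] at hcov
        exact hcov
      have hkey := cycle_count α i hcov' V hd
      calc covW (cycleWord (m+1) α i ++ rest.flatten)
          ≤ ((idxL (cycleWord (m+1) α i)).toFinset \ V).card + covW rest.flatten :=
            covW_append_le _ _
        _ ≤ (∑ t, if α t = i t then 0 else 1) + covW rest.flatten := by
            rw [covW_cycle]
            exact Nat.add_le_add_right hkey _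
        _ ≤ exW (cycleWord (m+1) α i) + exW rest.flatten := by
            rw [exW_cycle]
            exact Nat.add_le_add_left ih' _
        _ = exW (cycleWord (m+1) α i ++ rest.flatten) := (exW_append _ _).symm


/-- Graph-counting lemma: if the graph `G` (with its linear edge order) is obtained by
gluing cycles `C(1), …, C(n)` at vertices, each cycle having at least `2` distinct
vertices, and `G` is `∂`-regular, then the number of vertices of `G` is at most the
number of non-degenerate `x`-edges of `G`. -/
theorem statement17 (n : ℕ) (hn : 1 ≤ n) (k : Fin n → ℕ) (hk : ∀ l, 1 ≤ k l)
    (α i : (l : Fin n) → Fin (k l) → ℕ)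
    (hcov : ∀ l, 2 ≤ covW (cycleWord (k l) (α l) (i l)))
    (w : List MonLetter)
    (hw : w = (List.ofFn fun l => cycleWord (k l) (α l) (i l)).flatten)
    (hreg : DRegular w) :
    covW w ≤ exW w := by
  subst hw
  apply main_lemma _ _ hreg
  intro c hc
  rw [List.mem_ofFn] at hc
  obtain ⟨l, hl⟩ := hc
  exact ⟨k l, α l, i l, hl.symm, hl ▸ hcov l⟩
end
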